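/- arXiv:2108.08431 — 4 statements merged into one kernel-verified Lean document; each statement's English description precedes it below -/
import Mathlib

section
/- Fix vertices w, v of Q, a real number x ≥ 0 (all sums taken in the extended nonnegative reals [0,∞]), and a sequence e₁, …, e_n of crossing arrows such that w ∼ s(e₁), r(e_i) ∼ s(e_{i+1}) for 1 ≤ i < n, and r(e_n) ∼ v (s and r denoting source and range). Let X(e₁⋯e_n, w, v) be the set of paths of the form ν₁e₁ν₂e₂⋯ν_ne_nν_{n+1}, where ν₁ is a path from w to s(e₁), ν_{i+1} is a path from r(e_i) to s(e_{i+1}) for 1 ≤ i < n, and ν_{n+1} is a path from r(e_n) to v. Then Σ_{p ∈ X(e₁⋯e_n,w,v)} x^{|p|} = Z_{w,s(e₁)}(x)·x·Z_{r(e₁),s(e₂)}(x)·x·⋯·x·Z_{r(e_n),v}(x), where Z_{a,b}(x) := Σ_{ν a path from a to b} x^{|ν|}. Moreover, Z_{w,v}(x) equals the sum of Σ_{p ∈ X(e₁⋯e_n,w,v)} x^{|p|} over all such sequences of crossing arrows (including the empty sequence n = 0). -/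
open ENNReal

noncomputable section

variable {Q : Type} [Quiver.{0} Q]

/-- `a ∼ b` : there are directed paths (possibly empty) from `a` to `b` and from `b` to `a`. -/
def QConn (a b : Q) : Prop := Nonempty (Quiver.Path a b) ∧ Nonempty (Quiver.Path b a)

/-- An arrow `e : a ⟶ b` is crossing if `¬(a ∼ b)`. -/
def Crossing {a b : Q} (_e : a ⟶ b) : Prop := ¬ QConn a b

/-- `Z_{a,b}(x) := Σ_{ν a path from a to b} x^{|ν|}`, a sum in `[0,∞]`. -/
def pathZ (a b : Q) (x : ℝ) : ℝ≥0∞ :=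
  ∑' p : Quiver.Path a b, ENNReal.ofReal x ^ p.length

/-- A sequence of crossing arrows `e₁, …, e_n` (from `a` to `d`) such that `a ∼ s(e₁)`,
`r(eᵢ) ∼ s(e_{i+1})` for `1 ≤ i < n`, and `r(e_n) ∼ d` (for `n = 0`, just `a ∼ d`). -/
inductive Chain : Q → Q → Type where
  | nil : ∀ {a b : Q}, QConn a b → Chain a b
  | cons : ∀ {a b c d : Q}, QConn a b → ∀ (e : b ⟶ c), Crossing e → Chain c d → Chain a d

/-- `X(e₁⋯e_n, w, v)`: the set of paths of the form `ν₁e₁ν₂e₂⋯ν_ne_nν_{n+1}` where `ν₁` is a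
path from `w` to `s(e₁)`, `ν_{i+1}` is a path from `r(eᵢ)` to `s(e_{i+1})`, and `ν_{n+1}` is a
path from `r(e_n)` to `v`. -/
def chainSet : ∀ {a d : Q}, Chain a d → Set (Quiver.Path a d)
  | _, _, .nil _ => Set.univ
  | a, d, .cons (b := b) (c := c) _ e _ rest =>
      {p | ∃ (ν : Quiver.Path a b) (q : Quiver.Path c d),
        q ∈ chainSet rest ∧ p = (ν.cons e).comp q}

/-- The product `Z_{w,s(e₁)}(x)·x·Z_{r(e₁),s(e₂)}(x)·x·⋯·x·Z_{r(e_n),v}(x)`. -/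
def chainProd (x : ℝ) : ∀ {a d : Q}, Chain a d → ℝ≥0∞
  | a, d, .nil _ => pathZ a d x
  | a, _, .cons (b := b) _ _ _ rest => pathZ a b x * ENNReal.ofReal x * chainProd x rest

/-! ### Auxiliary lemmas -/

theorem QConn.refl (a : Q) : QConn a a := ⟨⟨Quiver.Path.nil⟩, ⟨Quiver.Path.nil⟩⟩

theorem QConn.trans {a b c : Q} (h : QConn a b) (h' : QConn b c) : QConn a c :=
  ⟨h.1.elim fun p => h'.1.elim fun q => ⟨p.comp q⟩,
   h'.2.elim fun p => h.2.elim fun q => ⟨p.comp q⟩⟩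

/-- A path is crossing-free if none of its arrows is crossing. -/
def CF : ∀ {a b : Q}, Quiver.Path a b → Prop
  | _, _, .nil => True
  | _, _, .cons p e => CF p ∧ ¬ Crossing e

@[simp] theorem cf_nil {a : Q} : CF (Quiver.Path.nil : Quiver.Path a a) := by
  simp [CF]

@[simp] theorem cf_cons {a b c : Q} {p : Quiver.Path a b} {e : b ⟶ c} :
    CF (p.cons e) ↔ CF p ∧ ¬ Crossing e := by
  simp [CF]

/-- If `a ∼ b` then every path from `a` to `b` is crossing-free. -/
theorem cf_of_qconn : ∀ {a b : Q} (p : Quiver.Path a b), QConn a b → CF p := by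
  intro a b p
  induction p with
  | nil => intro _; exact cf_nil
  | cons p' g ih =>
    intro h
    refine cf_cons.mpr ⟨ih ⟨⟨p'⟩, h.2.elim fun r => ⟨(Quiver.Hom.toPath g).comp r⟩⟩, ?_⟩
    intro hc
    exact hc ⟨⟨Quiver.Hom.toPath g⟩, h.2.elim fun r => ⟨r.comp p'⟩⟩

theorem cf_comp : ∀ {a b c : Q} (p : Quiver.Path a b) (q : Quiver.Path b c),
    CF (p.comp q) → CF p ∧ CF q := by
  intro a b c p q
  induction q with
  | nil => exact fun h => ⟨h, cf_nil⟩
  | cons q' g ih =>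
    intro h
    obtain ⟨h1, h2⟩ := cf_cons.mp h
    exact ⟨(ih h1).1, cf_cons.mpr ⟨(ih h1).2, h2⟩⟩

/-- Splitting a path at an occurrence of a fixed crossing arrow is injective. -/
theorem cons_comp_inj {a b c : Q} (e : b ⟶ c) (he : Crossing e) :
    ∀ {d : Q} (q₁ q₂ : Quiver.Path c d) (ν₁ ν₂ : Quiver.Path a b),
      (ν₁.cons e).comp q₁ = (ν₂.cons e).comp q₂ → ν₁ = ν₂ ∧ q₁ = q₂ := by
  intro d q₁
  induction q₁ with
  | nil =>
    intro q₂ ν₁ ν₂ h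
    cases q₂ with
    | nil =>
      rw [Quiver.Path.comp_nil, Quiver.Path.comp_nil] at h
      exact ⟨eq_of_heq (Quiver.Path.heq_of_cons_eq_cons h), rfl⟩
    | cons q₂' f =>
      rw [Quiver.Path.comp_nil, Quiver.Path.comp_cons] at h
      exfalso
      have hb := Quiver.Path.obj_eq_of_cons_eq_cons h
      subst hb
      exact he ⟨⟨Quiver.Hom.toPath e⟩, ⟨q₂'⟩⟩
  | cons q₁' f₁ ih =>
    intro q₂ ν₁ ν₂ h
    cases q₂ with
    | nil =>
      rw [Quiver.Path.comp_nil, Quiver.Path.comp_cons] at h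
      exfalso
      have hb := Quiver.Path.obj_eq_of_cons_eq_cons h
      subst hb
      exact he ⟨⟨Quiver.Hom.toPath e⟩, ⟨q₁'⟩⟩
    | cons q₂' f₂ =>
      rw [Quiver.Path.comp_cons, Quiver.Path.comp_cons] at h
      have hm := Quiver.Path.obj_eq_of_cons_eq_cons h
      subst hm
      have hf := eq_of_heq (Quiver.Path.hom_heq_of_cons_eq_cons h)
      have hX := eq_of_heq (Quiver.Path.heq_of_cons_eq_cons h)
      obtain ⟨h1, h2⟩ := ih q₂' ν₁ ν₂ hX
      exact ⟨h1, by rw [h2, hf]⟩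

/-- Uniqueness of decomposition at the first crossing arrow. -/
theorem decomp_unique {a : Q} :
    ∀ {d b₁ c₁ b₂ c₂ : Q} (q₁ : Quiver.Path c₁ d) (q₂ : Quiver.Path c₂ d)
      (ν₁ : Quiver.Path a b₁) (e₁ : b₁ ⟶ c₁) (ν₂ : Quiver.Path a b₂) (e₂ : b₂ ⟶ c₂),
      CF ν₁ → Crossing e₁ → CF ν₂ → Crossing e₂ →
      (ν₁.cons e₁).comp q₁ = (ν₂.cons e₂).comp q₂ →
      b₁ = b₂ ∧ c₁ = c₂ ∧ HEq ν₁ ν₂ ∧ HEq e₁ e₂ ∧ HEq q₁ q₂ := by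
  intro d b₁ c₁ b₂ c₂ q₁
  induction q₁ with
  | nil =>
    intro q₂ ν₁ e₁ ν₂ e₂ hcf₁ he₁ hcf₂ he₂ h
    cases q₂ with
    | nil =>
      rw [Quiver.Path.comp_nil, Quiver.Path.comp_nil] at h
      have hb := Quiver.Path.obj_eq_of_cons_eq_cons h
      subst hb
      exact ⟨rfl, rfl, heq_of_eq (eq_of_heq (Quiver.Path.heq_of_cons_eq_cons h)),
        Quiver.Path.hom_heq_of_cons_eq_cons h, HEq.rfl⟩
    | cons q₂' f =>
      rw [Quiver.Path.comp_nil, Quiver.Path.comp_cons] at h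
      exfalso
      have hb := Quiver.Path.obj_eq_of_cons_eq_cons h
      subst hb
      have hν := eq_of_heq (Quiver.Path.heq_of_cons_eq_cons h)
      rw [hν] at hcf₁
      exact (cf_cons.mp (cf_comp _ _ hcf₁).1).2 he₂
  | cons q₁' f₁ ih =>
    intro q₂ ν₁ e₁ ν₂ e₂ hcf₁ he₁ hcf₂ he₂ h
    cases q₂ with
    | nil =>
      rw [Quiver.Path.comp_nil, Quiver.Path.comp_cons] at h
      exfalso
      have hb := Quiver.Path.obj_eq_of_cons_eq_cons h
      subst hb
      have hν := eq_of_heq (Quiver.Path.heq_of_cons_eq_cons h)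
      rw [← hν] at hcf₂
      exact (cf_cons.mp (cf_comp _ _ hcf₂).1).2 he₁
    | cons q₂' f₂ =>
      rw [Quiver.Path.comp_cons, Quiver.Path.comp_cons] at h
      have hm := Quiver.Path.obj_eq_of_cons_eq_cons h
      subst hm
      have hf := eq_of_heq (Quiver.Path.hom_heq_of_cons_eq_cons h)
      have hX := eq_of_heq (Quiver.Path.heq_of_cons_eq_cons h)
      obtain ⟨hb, hc, hν, he, hq⟩ := ih q₂' ν₁ e₁ ν₂ e₂ hcf₁ he₁ hcf₂ he₂ hX
      subst hb; subst hc
      exact ⟨rfl, rfl, hν, he, heq_of_eq (by rw [eq_of_heq hq, hf])⟩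

/-- Uniqueness: a path belongs to the `chainSet` of at most one chain. -/
theorem chainSet_uniq : ∀ {a d : Q} (ch₁ ch₂ : Chain a d) (p : Quiver.Path a d),
    p ∈ chainSet ch₁ → p ∈ chainSet ch₂ → ch₁ = ch₂ := by
  intro a d ch₁
  induction ch₁ with
  | nil h =>
    intro ch₂ p h₁ h₂
    cases ch₂ with
    | nil h' => rfl
    | cons h' e he rest =>
      obtain ⟨ν, q, hq, rfl⟩ := h₂
      exact absurd he
        (fun hcr => (cf_cons.mp (cf_comp (ν.cons e) q (cf_of_qconn _ h)).1).2 hcr)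
  | cons h e he rest ih =>
    intro ch₂ p h₁ h₂
    cases ch₂ with
    | nil h' =>
      obtain ⟨ν, q, hq, rfl⟩ := h₁
      exact absurd he
        (fun hcr => (cf_cons.mp (cf_comp (ν.cons e) q (cf_of_qconn _ h')).1).2 hcr)
    | cons h' e' he' rest' =>
      obtain ⟨ν, q, hq, rfl⟩ := h₁
      obtain ⟨ν', q', hq', hp⟩ := h₂
      obtain ⟨hb, hc, hν, heq, hqq⟩ := decomp_unique q q' ν e ν' e'
        (cf_of_qconn ν h) he (cf_of_qconn ν' h') he' hp
      subst hb; subst hc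
      have : rest = rest' := ih rest' q hq (eq_of_heq hqq ▸ hq')
      rw [eq_of_heq heq, this]

def Chain.snoc : ∀ {a b c : Q}, Chain a b → (e : b ⟶ c) → Crossing e → Chain a c
  | _, _, _, .nil h, e, he => .cons h e he (.nil (QConn.refl _))
  | _, _, _, .cons h f hf rest, e, he => .cons h f hf (rest.snoc e he)

def Chain.trans : ∀ {a b c : Q}, Chain a b → QConn b c → Chain a c
  | _, _, _, .nil h, h' => .nil (h.trans h')
  | _, _, _, .cons h f hf rest, h' => .cons h f hf (rest.trans h')

theorem mem_snoc : ∀ {a b c : Q} (ch : Chain a b) (e : b ⟶ c) (he : Crossing e)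
    (p : Quiver.Path a b), p ∈ chainSet ch → p.cons e ∈ chainSet (ch.snoc e he) := by
  intro a b c ch
  induction ch with
  | nil h =>
    intro e he p _
    exact ⟨p, Quiver.Path.nil, Set.mem_univ _, rfl⟩
  | cons h f hf rest ih =>
    intro e he p hp
    obtain ⟨ν, q, hq, rfl⟩ := hp
    exact ⟨ν, q.cons e, ih e he q hq, rfl⟩

theorem mem_trans : ∀ {a b c : Q} (ch : Chain a b) (h' : QConn b c) (e : b ⟶ c)
    (p : Quiver.Path a b), p ∈ chainSet ch → p.cons e ∈ chainSet (ch.trans h') := by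
  intro a b c ch
  induction ch with
  | nil h => intro h' e p _; exact Set.mem_univ _
  | cons h f hf rest ih =>
    intro h' e p hp
    obtain ⟨ν, q, hq, rfl⟩ := hp
    exact ⟨ν, q.cons e, ih h' e q hq, rfl⟩

open Classical in
/-- The chain of a path: split at its crossing arrows. -/
def chainOf {a : Q} : ∀ {b : Q}, Quiver.Path a b → Chain a b
  | _, .nil => .nil (QConn.refl a)
  | _, .cons (b := m) p e =>
    if h : QConn m _ then (chainOf p).trans h else (chainOf p).snoc e h

theorem mem_chainOf : ∀ {a b : Q} (p : Quiver.Path a b), p ∈ chainSet (chainOf p) := by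
  intro a b p
  induction p with
  | nil => exact Set.mem_univ _
  | cons p' e ih =>
    rw [chainOf]
    split
    · exact mem_trans _ _ e p' ih
    · exact mem_snoc _ e _ p' ih

theorem chain_sum {a d : Q} (x : ℝ) (ch : Chain a d) :
    ∑' p : chainSet ch, ENNReal.ofReal x ^ (p : Quiver.Path a d).length = chainProd x ch := by
  induction ch with
  | nil h =>
    rename_i a' d'
    have h1 : chainSet (Chain.nil h : Chain a' d') = Set.univ := rfl
    have h2 : chainProd x (Chain.nil h : Chain a' d') = pathZ a' d' x := rfl
    rw [h1, h2]
    exact tsum_univ fun p : Quiver.Path a' d' => ENNReal.ofReal x ^ p.length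
  | cons h e he rest ih =>
    rename_i a b c d
    have hbij : Function.Bijective
        (fun s : Quiver.Path a b × ↥(chainSet rest) =>
          (⟨(s.1.cons e).comp (s.2 : Quiver.Path c d), s.1, s.2, s.2.2, rfl⟩ :
            ↥(chainSet (Chain.cons h e he rest)))) := by
      constructor
      · rintro ⟨ν₁, q₁, hq₁⟩ ⟨ν₂, q₂, hq₂⟩ hEq
        have hval : (ν₁.cons e).comp q₁ = (ν₂.cons e).comp q₂ := congrArg Subtype.val hEq
        obtain ⟨h1, h2⟩ := cons_comp_inj e he q₁ q₂ ν₁ ν₂ hval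
        simp only [Prod.mk.injEq, Subtype.mk.injEq]
        exact ⟨h1, h2⟩
      · rintro ⟨p, ν, q, hq, rfl⟩
        exact ⟨(ν, ⟨q, hq⟩), rfl⟩
    have key := (Equiv.ofBijective _ hbij).tsum_eq
      (fun p : ↥(chainSet (Chain.cons h e he rest)) =>
        ENNReal.ofReal x ^ (p : Quiver.Path a d).length)
    rw [← key]
    show (∑' s : Quiver.Path a b × ↥(chainSet rest),
        ENNReal.ofReal x ^ ((s.1.cons e).comp (s.2 : Quiver.Path c d)).length) = _
    rw [ENNReal.tsum_prod']
    show _ = pathZ a b x * ENNReal.ofReal x * chainProd x rest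
    rw [← ih, pathZ]
    rw [← ENNReal.tsum_mul_right, ← ENNReal.tsum_mul_right]
    refine tsum_congr fun ν => ?_
    rw [← ENNReal.tsum_mul_left]
    refine tsum_congr fun q => ?_
    rw [Quiver.Path.length_comp, Quiver.Path.length_cons, pow_add, pow_add, pow_one]

/-- The bijection between paths and pairs (chain, element of its chain set). -/
def chainEquiv (w v : Q) : (Σ ch : Chain w v, ↥(chainSet ch)) ≃ Quiver.Path w v where
  toFun s := (s.2 : Quiver.Path w v)
  invFun p := ⟨chainOf p, ⟨p, mem_chainOf p⟩⟩
  left_inv := by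
    rintro ⟨ch, p, hp⟩
    have hch : chainOf p = ch := chainSet_uniq (chainOf p) ch p (mem_chainOf p) hp
    subst hch
    rfl
  right_inv p := rfl

/-- for each admissible sequence of crossing arrows `e₁⋯e_n`,
`Σ_{p ∈ X(e₁⋯e_n,w,v)} x^{|p|} = Z_{w,s(e₁)}·x·Z_{r(e₁),s(e₂)}·x·⋯·x·Z_{r(e_n),v}`;
moreover `Z_{w,v}(x)` is the sum of these quantities over all such sequences. -/
theorem stmt12 [Fintype Q] [∀ a b : Q, Fintype (a ⟶ b)] (w v : Q) (x : ℝ) (hx : 0 ≤ x) :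
    (∀ ch : Chain w v,
      ∑' p : chainSet ch, ENNReal.ofReal x ^ (p : Quiver.Path w v).length = chainProd x ch) ∧
    pathZ w v x =
      ∑' ch : Chain w v, ∑' p : chainSet ch, ENNReal.ofReal x ^ (p : Quiver.Path w v).length := by
  constructor
  · exact fun ch => chain_sum x ch
  · have key : ∑' s : (Σ ch : Chain w v, ↥(chainSet ch)),
        ENNReal.ofReal x ^ ((s.2 : Quiver.Path w v)).length
        = ∑' p : Quiver.Path w v, ENNReal.ofReal x ^ p.length :=
      (chainEquiv w v).tsum_eq fun p : Quiver.Path w v => ENNReal.ofReal x ^ p.length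
    rw [pathZ, ← key]
    exact ENNReal.tsum_sigma' fun s : (Σ ch : Chain w v, ↥(chainSet ch)) =>
      ENNReal.ofReal x ^ ((s.2 : Quiver.Path w v)).length
end
end

section
/- Let β > 0 and suppose h : V → ℝ is a nonzero vector with nonnegative entries satisfying A·h = e^β·h. Then: (a) there exists a minimal strongly connected component C with ρ(A_C) = e^β; (b) for every strongly connected component C with ρ(A_C) > e^β, h vanishes on C; and (c) for every strongly connected component C with ρ(A_C) = e^β that is not minimal, h vanishes on C. -/
open Filter Topology ENNReal

noncomputable section

/-- Every subset of a finite type is a `Fintype` (classically). -/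
noncomputable def setFintypeAux {V : Type*} [Fintype V] (S : Set V) : Fintype S :=
  S.toFinite.fintype

attribute [local instance] setFintypeAux

variable {V : Type*} [Fintype V] [DecidableEq V]

/-- `v ⟶* w` : some power of `A` has a positive `(v,w)` entry. -/
def Reaches (A : Matrix V V ℝ) (v w : V) : Prop := ∃ k : ℕ, 0 < (A ^ k) v w

/-- The spectral radius of a real matrix: the largest absolute value of a complex
eigenvalue. -/
def specRad (A : Matrix V V ℝ) : ℝ :=
  sSup {r : ℝ | ∃ μ ∈ spectrum ℂ (A.map fun t : ℝ => (t : ℂ)), r = ‖μ‖}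

/-- The `S × S` submatrix of `A`. -/
def subMat (A : Matrix V V ℝ) (S : Set V) : Matrix S S ℝ :=
  A.submatrix Subtype.val Subtype.val

/-- `ρ(A_S)`. -/
def specRadSub (A : Matrix V V ℝ) (S : Set V) : ℝ := specRad (subMat A S)

/-- The strongly connected component of `v`. -/
def sccOf (A : Matrix V V ℝ) (v : V) : Set V := {u | Reaches A v u ∧ Reaches A u v}

/-- `C` is a strongly connected component. -/
def IsSCC (A : Matrix V V ℝ) (C : Set V) : Prop := ∃ v : V, C = sccOf A v

/-- `C` is a minimal strongly connected component: every other component `C'` that reaches `C`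
has strictly smaller spectral radius. -/
def IsMinSCC (A : Matrix V V ℝ) (C : Set V) : Prop :=
  IsSCC A C ∧ ∀ C' : Set V, IsSCC A C' → C' ≠ C →
    (∃ v' ∈ C', ∃ u ∈ C, Reaches A v' u) → specRadSub A C' < specRadSub A C

/-- `Z_{w,v}(x) := Σ_{k=0}^∞ x^k (A^k)_{w,v} ∈ [0,∞]`. -/
def Zfun (A : Matrix V V ℝ) (w v : V) (x : ℝ) : ℝ≥0∞ :=
  ∑' k : ℕ, ENNReal.ofReal (x ^ k * (A ^ k) w v)

/-- `Z_v(x) := Σ_{w ∈ V} Z_{w,v}(x)`. -/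
def Zvert (A : Matrix V V ℝ) (v : V) (x : ℝ) : ℝ≥0∞ := ∑ w : V, Zfun A w v x

section Stmt13Aux

set_option linter.unusedSectionVars false

open Module

lemma pow_entry_nonneg' {n : Type*} [Fintype n] [DecidableEq n] (A : Matrix n n ℝ)
    (hA : ∀ i j, 0 ≤ A i j) (k : ℕ) : ∀ i j, 0 ≤ (A ^ k) i j := by
  induction k with
  | zero => intro i j; rw [pow_zero, Matrix.one_apply]; split <;> norm_num
  | succ k ih =>
      intro i j
      rw [pow_succ, Matrix.mul_apply]
      exact Finset.sum_nonneg fun m _ => mul_nonneg (ih i m) (hA m j)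

lemma pow_mul_le' {n : Type*} [Fintype n] [DecidableEq n] (A : Matrix n n ℝ)
    (hA : ∀ i j, 0 ≤ A i j) (k l : ℕ) (i m j : n) :
    (A ^ k) i m * (A ^ l) m j ≤ (A ^ (k + l)) i j := by
  rw [pow_add, Matrix.mul_apply]
  exact Finset.single_le_sum
    (f := fun m' => (A ^ k) i m' * (A ^ l) m' j)
    (fun m' _ => mul_nonneg (pow_entry_nonneg' A hA k i m') (pow_entry_nonneg' A hA l m' j))
    (Finset.mem_univ m)

lemma pow_succ_exists' {n : Type*} [Fintype n] [DecidableEq n] (A : Matrix n n ℝ)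
    (hA : ∀ i j, 0 ≤ A i j) (k : ℕ) (i j : n) (h : 0 < (A ^ (k + 1)) i j) :
    ∃ m, 0 < A i m ∧ 0 < (A ^ k) m j := by
  rw [pow_succ', Matrix.mul_apply] at h
  by_contra hc
  push_neg at hc
  have hle : ∀ m ∈ Finset.univ, A i m * (A ^ k) m j ≤ (0 : ℝ) := by
    intro m _
    by_cases hm : 0 < A i m
    · have h0 : (A ^ k) m j = 0 := le_antisymm (hc m hm) (pow_entry_nonneg' A hA k m j)
      simp [h0]
    · have : A i m = 0 := le_antisymm (not_lt.mp hm) (hA i m)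
      simp [this]
  exact absurd h (not_lt.mpr (by simpa using Finset.sum_nonpos hle))

lemma reaches_refl (A : Matrix V V ℝ) (v : V) : Reaches A v v :=
  ⟨0, by simp [Matrix.one_apply]⟩

lemma reaches_trans (A : Matrix V V ℝ) (hA : ∀ i j, 0 ≤ A i j) {u v w : V}
    (h1 : Reaches A u v) (h2 : Reaches A v w) : Reaches A u w := by
  obtain ⟨k, hk⟩ := h1; obtain ⟨l, hl⟩ := h2
  exact ⟨k + l, lt_of_lt_of_le (mul_pos hk hl) (pow_mul_le' A hA k l u v w)⟩

lemma reaches_of_edge (A : Matrix V V ℝ) {i m : V} (h : 0 < A i m) : Reaches A i m :=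
  ⟨1, by simpa [pow_one] using h⟩

lemma mem_sccOf_self (A : Matrix V V ℝ) (v : V) : v ∈ sccOf A v :=
  ⟨reaches_refl A v, reaches_refl A v⟩

lemma sccOf_eq_of_mem (A : Matrix V V ℝ) (hA : ∀ i j, 0 ≤ A i j) {v u : V}
    (hu : u ∈ sccOf A v) : sccOf A u = sccOf A v := by
  obtain ⟨hvu, huv⟩ := hu
  ext w
  constructor
  · rintro ⟨h1, h2⟩
    exact ⟨reaches_trans A hA hvu h1, reaches_trans A hA h2 huv⟩
  · rintro ⟨h1, h2⟩
    exact ⟨reaches_trans A hA huv h1, reaches_trans A hA h2 hvu⟩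

lemma mem_univ_map_subtype (C : Set V) (x : V) :
    x ∈ Finset.univ.map (Function.Embedding.subtype (· ∈ C)) ↔ x ∈ C := by
  simp [Finset.mem_map, Function.Embedding.coe_subtype, Subtype.exists]

lemma sum_subtype_le_sum (C : Set V) (F : V → ℝ) (hF : ∀ j, 0 ≤ F j) :
    ∑ j : C, F ↑j ≤ ∑ j : V, F j := by
  rw [show (∑ j : C, F ↑j) = ∑ j ∈ Finset.univ.map (Function.Embedding.subtype (· ∈ C)), F j
    from (Finset.sum_map Finset.univ (Function.Embedding.subtype (· ∈ C)) F).symm]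
  exact Finset.sum_le_sum_of_subset_of_nonneg (Finset.subset_univ _) fun j _ _ => hF j

lemma sum_subtype_le_sum_erase (C : Set V) (F : V → ℝ) (hF : ∀ j, 0 ≤ F j) (b : V)
    (hb : b ∉ C) : ∑ j : C, F ↑j ≤ ∑ j ∈ Finset.univ.erase b, F j := by
  rw [show (∑ j : C, F ↑j) = ∑ j ∈ Finset.univ.map (Function.Embedding.subtype (· ∈ C)), F j
    from (Finset.sum_map Finset.univ (Function.Embedding.subtype (· ∈ C)) F).symm]
  refine Finset.sum_le_sum_of_subset_of_nonneg ?_ fun j _ _ => hF j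
  intro x hx
  rw [mem_univ_map_subtype] at hx
  exact Finset.mem_erase.mpr ⟨fun h => hb (h ▸ hx), Finset.mem_univ x⟩

lemma sum_subtype_eq_sum (C : Set V) (F : V → ℝ) (hF0 : ∀ j, j ∉ C → F j = 0) :
    ∑ j : C, F ↑j = ∑ j : V, F j := by
  rw [show (∑ j : C, F ↑j) = ∑ j ∈ Finset.univ.map (Function.Embedding.subtype (· ∈ C)), F j
    from (Finset.sum_map Finset.univ (Function.Embedding.subtype (· ∈ C)) F).symm]
  refine Finset.sum_subset (Finset.subset_univ _) fun x _ hx => ?_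
  exact hF0 x fun hc => hx ((mem_univ_map_subtype C x).mpr hc)

lemma exists_eigenvector_of_mem_spectrum {n : Type*} [Fintype n] [DecidableEq n]
    (M : Matrix n n ℂ) (μ : ℂ)
    (hμ : μ ∈ spectrum ℂ M) : ∃ x : n → ℂ, x ≠ 0 ∧ M.mulVec x = μ • x := by
  rw [← AlgEquiv.spectrum_eq (Matrix.toLinAlgEquiv <| Pi.basisFun ℂ n),
    ← Module.End.hasEigenvalue_iff_mem_spectrum] at hμ
  obtain ⟨x, hx⟩ := hμ.exists_hasEigenvector
  refine ⟨x, hx.right, ?_⟩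
  have := hx.apply_eq_smul
  rw [Matrix.toLinAlgEquiv_apply] at this
  rw [← this]
  ext i
  simp [Pi.single_apply, Finset.sum_ite_eq', mul_comm, Matrix.mulVec, dotProduct,
    Pi.basisFun_repr]

lemma abs_eigenvalue_le {n : Type*} [Fintype n] [DecidableEq n]
    (B : Matrix n n ℝ) (hB : ∀ i j, 0 ≤ B i j)
    (g : n → ℝ) (hg : ∀ i, 0 < g i) (r : ℝ)
    (hsub : ∀ i, B.mulVec g i ≤ r * g i) (μ : ℂ)
    (hμ : μ ∈ spectrum ℂ (B.map fun t : ℝ => (t : ℂ))) : ‖μ‖ ≤ r := by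
  obtain ⟨x, hx0, hx⟩ := exists_eigenvector_of_mem_spectrum _ _ hμ
  obtain ⟨j₀, hj₀⟩ := Function.ne_iff.mp hx0
  have hne : Nonempty n := ⟨j₀⟩
  obtain ⟨i₀, -, hmax⟩ := Finset.exists_max_image Finset.univ
    (fun i => ‖x i‖ / g i) Finset.univ_nonempty
  set c : ℝ := ‖x i₀‖ / g i₀ with hc_def
  have hxle : ∀ j, ‖x j‖ ≤ c * g j := fun j =>
    (div_le_iff₀ (hg j)).mp (hmax j (Finset.mem_univ j))
  have hc : 0 < c := lt_of_lt_of_le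
    (div_pos (by simpa [norm_pos_iff] using hj₀) (hg j₀)) (hmax j₀ (Finset.mem_univ j₀))
  have hxi₀ : ‖x i₀‖ = c * g i₀ := by
    rw [hc_def, div_mul_cancel₀]
    exact (hg i₀).ne'
  have hxi₀pos : 0 < ‖x i₀‖ := by rw [hxi₀]; exact mul_pos hc (hg i₀)
  have key : ‖μ‖ * ‖x i₀‖ ≤ r * ‖x i₀‖ := by
    have h1 : ‖μ‖ * ‖x i₀‖
        = ‖(B.map fun t : ℝ => (t:ℂ)).mulVec x i₀‖ := by
      rw [hx]; simp [mul_comm]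
    rw [h1]
    have h2 : (B.map fun t : ℝ => (t:ℂ)).mulVec x i₀ = ∑ j, (B i₀ j : ℂ) * x j := by
      simp [Matrix.mulVec, dotProduct, Matrix.map_apply]
    rw [h2]
    calc ‖∑ j, (B i₀ j : ℂ) * x j‖
        ≤ ∑ j, ‖(B i₀ j : ℂ) * x j‖ := norm_sum_le _ _
      _ = ∑ j, B i₀ j * ‖x j‖ := by
          simp [norm_mul, Complex.norm_real, abs_of_nonneg (hB i₀ _)]
      _ ≤ ∑ j, B i₀ j * (c * g j) :=
          Finset.sum_le_sum fun j _ => mul_le_mul_of_nonneg_left (hxle j) (hB i₀ j)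
      _ = c * ∑ j, B i₀ j * g j := by
          rw [Finset.mul_sum]; exact Finset.sum_congr rfl fun j _ => by ring
      _ = c * B.mulVec g i₀ := by simp [Matrix.mulVec, dotProduct]
      _ ≤ c * (r * g i₀) := mul_le_mul_of_nonneg_left (hsub i₀) hc.le
      _ = r * ‖x i₀‖ := by rw [hxi₀]; ring
  exact le_of_mul_le_mul_right key hxi₀pos

lemma abs_eigenvalue_lt {n : Type*} [Fintype n] [DecidableEq n]
    (B : Matrix n n ℝ) (hB : ∀ i j, 0 ≤ B i j)
    (hconn : ∀ i j : n, ∃ k, 0 < (B ^ k) i j)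
    (g : n → ℝ) (hg : ∀ i, 0 < g i) (r : ℝ)
    (hsub : ∀ i, B.mulVec g i ≤ r * g i)
    (i₁ : n) (hstrict : B.mulVec g i₁ < r * g i₁) (μ : ℂ)
    (hμ : μ ∈ spectrum ℂ (B.map fun t : ℝ => (t : ℂ))) : ‖μ‖ < r := by
  rcases (abs_eigenvalue_le B hB g hg r hsub μ hμ).lt_or_eq with h | habs
  · exact h
  exfalso
  obtain ⟨x, hx0, hx⟩ := exists_eigenvector_of_mem_spectrum _ _ hμ
  obtain ⟨j₀, hj₀⟩ := Function.ne_iff.mp hx0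
  have hne : Nonempty n := ⟨j₀⟩
  obtain ⟨i₀, -, hmax⟩ := Finset.exists_max_image Finset.univ
    (fun i => ‖x i‖ / g i) Finset.univ_nonempty
  set c : ℝ := ‖x i₀‖ / g i₀ with hc_def
  have hxle : ∀ j, ‖x j‖ ≤ c * g j := fun j =>
    (div_le_iff₀ (hg j)).mp (hmax j (Finset.mem_univ j))
  have hc : 0 < c := lt_of_lt_of_le
    (div_pos (by simpa [norm_pos_iff] using hj₀) (hg j₀)) (hmax j₀ (Finset.mem_univ j₀))
  have hxi₀ : ‖x i₀‖ = c * g i₀ := by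
    rw [hc_def, div_mul_cancel₀]; exact (hg i₀).ne'
  set P : n → Prop := fun j => ‖x j‖ = c * g j with hP_def
  have step : ∀ j, P j → (∀ k, 0 < B j k → P k) ∧ B.mulVec g j = r * g j := by
    intro j hPj
    have h2 : (B.map fun t : ℝ => (t:ℂ)).mulVec x j = ∑ k, (B j k : ℂ) * x k := by
      simp [Matrix.mulVec, dotProduct, Matrix.map_apply]
    have t0eq : r * (c * g j) = ‖∑ k, (B j k : ℂ) * x k‖ := by
      rw [← h2, hx]
      simp only [Pi.smul_apply, smul_eq_mul, norm_mul, habs, show ‖x j‖ = c * g j from hPj]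
    have h01 : r * (c * g j) ≤ ∑ k, B j k * ‖x k‖ := by
      rw [t0eq]
      calc ‖∑ k, (B j k : ℂ) * x k‖
          ≤ ∑ k, ‖(B j k : ℂ) * x k‖ := norm_sum_le _ _
        _ = ∑ k, B j k * ‖x k‖ := by
            simp [norm_mul, Complex.norm_real, abs_of_nonneg (hB j _)]
    have h12 : ∀ k ∈ Finset.univ, B j k * ‖x k‖ ≤ B j k * (c * g k) :=
      fun k _ => mul_le_mul_of_nonneg_left (hxle k) (hB j k)
    have h2eq : (∑ k, B j k * (c * g k)) = c * B.mulVec g j := by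
      simp only [Matrix.mulVec, dotProduct, Finset.mul_sum]
      exact Finset.sum_congr rfl fun k _ => by ring
    have h23 : c * B.mulVec g j ≤ c * (r * g j) := mul_le_mul_of_nonneg_left (hsub j) hc.le
    have h3eq : c * (r * g j) = r * (c * g j) := by ring
    have e12 : (∑ k, B j k * ‖x k‖) = ∑ k, B j k * (c * g k) := by
      refine le_antisymm (Finset.sum_le_sum h12) ?_
      calc (∑ k, B j k * (c * g k)) = c * B.mulVec g j := h2eq
        _ ≤ c * (r * g j) := h23
        _ = r * (c * g j) := h3eq
        _ ≤ ∑ k, B j k * ‖x k‖ := h01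
    have e23 : c * B.mulVec g j = c * (r * g j) := by
      refine le_antisymm h23 ?_
      calc c * (r * g j) = r * (c * g j) := h3eq
        _ ≤ ∑ k, B j k * ‖x k‖ := h01
        _ = ∑ k, B j k * (c * g k) := e12
        _ = c * B.mulVec g j := h2eq
    constructor
    · intro k hk
      have := (Finset.sum_eq_sum_iff_of_le h12).mp e12 k (Finset.mem_univ k)
      exact mul_left_cancel₀ hk.ne' this
    · exact mul_left_cancel₀ hc.ne' e23
  have closure : ∀ k j l, P j → 0 < (B ^ k) j l → P l := by
    intro k
    induction k with
    | zero =>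
        intro j l hPj hpos
        rw [pow_zero, Matrix.one_apply] at hpos
        by_cases hjl : j = l
        · exact hjl ▸ hPj
        · simp [hjl] at hpos
    | succ k ih =>
        intro j l hPj hpos
        obtain ⟨m, hm1, hm2⟩ := pow_succ_exists' B hB k j l hpos
        exact ih m l ((step j hPj).1 m hm1) hm2
  have hPi₀ : P i₀ := hxi₀
  obtain ⟨k, hk⟩ := hconn i₀ i₁
  exact absurd ((step i₁ (closure k i₀ i₁ hPi₀ hk)).2) (ne_of_lt hstrict)

lemma specRad_le_of_subinv {n : Type*} [Fintype n] [DecidableEq n]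
    (B : Matrix n n ℝ) (hB : ∀ i j, 0 ≤ B i j)
    (g : n → ℝ) (hg : ∀ i, 0 < g i) (r : ℝ) (hr : 0 ≤ r)
    (hsub : ∀ i, B.mulVec g i ≤ r * g i) : specRad B ≤ r := by
  refine Real.sSup_le ?_ hr
  rintro s ⟨μ, hμ, rfl⟩
  exact abs_eigenvalue_le B hB g hg r hsub μ hμ

lemma specRad_eq_of_eig {n : Type*} [Fintype n] [DecidableEq n] [Nonempty n]
    (B : Matrix n n ℝ) (hB : ∀ i j, 0 ≤ B i j)
    (g : n → ℝ) (hg : ∀ i, 0 < g i) (r : ℝ) (hr : 0 < r)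
    (heig : B.mulVec g = r • g) : specRad B = r := by
  have hsub : ∀ i, B.mulVec g i ≤ r * g i := fun i => le_of_eq (by rw [heig]; simp)
  have hmem : (r : ℂ) ∈ spectrum ℂ (B.map fun t : ℝ => (t : ℂ)) := by
    rw [spectrum.mem_iff]
    intro hunit
    set M : Matrix n n ℂ := algebraMap ℂ (Matrix n n ℂ) (r : ℂ) - B.map (fun t : ℝ => (t : ℂ))
      with hM
    have hdet : M.det = 0 := by
      rw [← Matrix.exists_mulVec_eq_zero_iff]
      refine ⟨fun i => (g i : ℂ), ?_, ?_⟩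
      · intro hg0
        have := congrFun hg0 (Classical.arbitrary n)
        simp only [Pi.zero_apply, Complex.ofReal_eq_zero] at this
        exact (hg _).ne' this
      · ext i
        have h1 : (B.map (fun t : ℝ => (t : ℂ))).mulVec (fun i => (g i : ℂ)) i
            = ((B.mulVec g i : ℝ) : ℂ) := by
          simp [Matrix.mulVec, dotProduct, Matrix.map_apply]
        rw [hM, Matrix.sub_mulVec, Algebra.algebraMap_eq_smul_one, Matrix.smul_mulVec,
          Matrix.one_mulVec]
        simp only [Pi.sub_apply, Pi.smul_apply, smul_eq_mul, h1, heig, Pi.zero_apply]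
        push_cast
        ring
    rw [Matrix.isUnit_iff_isUnit_det, hdet] at hunit
    simpa using hunit
  apply le_antisymm
  · exact specRad_le_of_subinv B hB g hg r hr.le hsub
  · apply le_csSup
    · exact ⟨r, by rintro s ⟨μ, hμ, rfl⟩; exact abs_eigenvalue_le B hB g hg r hsub μ hμ⟩
    · exact ⟨(r : ℂ), hmem, by rw [Complex.norm_real, Real.norm_eq_abs, abs_of_pos hr]⟩

lemma specRad_lt_of_subinv_strict {n : Type*} [Fintype n] [DecidableEq n] [Nonempty n]
    (B : Matrix n n ℝ) (hB : ∀ i j, 0 ≤ B i j)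
    (hconn : ∀ i j : n, ∃ k, 0 < (B ^ k) i j)
    (g : n → ℝ) (hg : ∀ i, 0 < g i) (r : ℝ)
    (hsub : ∀ i, B.mulVec g i ≤ r * g i)
    (i₁ : n) (hstrict : B.mulVec g i₁ < r * g i₁) : specRad B < r := by
  have hEfin : {s : ℝ | ∃ μ ∈ spectrum ℂ (B.map fun t : ℝ => (t : ℂ)),
      s = ‖μ‖}.Finite := by
    have h : {s : ℝ | ∃ μ ∈ spectrum ℂ (B.map fun t : ℝ => (t : ℂ)), s = ‖μ‖}
        = (fun μ => ‖μ‖) '' spectrum ℂ (B.map fun t : ℝ => (t : ℂ)) := by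
      ext s; simp [Set.mem_image, eq_comm]
    rw [h]
    exact (Matrix.finite_spectrum _).image _
  have hEne : {s : ℝ | ∃ μ ∈ spectrum ℂ (B.map fun t : ℝ => (t : ℂ)),
      s = ‖μ‖}.Nonempty := by
    obtain ⟨μ, hμ⟩ := spectrum.nonempty_of_isAlgClosed_of_finiteDimensional ℂ
      (B.map fun t : ℝ => (t : ℂ))
    exact ⟨‖μ‖, μ, hμ, rfl⟩
  obtain ⟨μ, hμ, heq⟩ := hEne.csSup_mem hEfin
  unfold specRad
  rw [heq]
  exact abs_eigenvalue_lt B hB hconn g hg r hsub i₁ hstrict μ hμ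

lemma subMat_nonneg (A : Matrix V V ℝ) (hA : ∀ i j, 0 ≤ A i j) (C : Set V) :
    ∀ i j : C, 0 ≤ subMat A C i j := fun i j => hA i j

lemma subMat_pow_pos (A : Matrix V V ℝ) (hA : ∀ i j, 0 ≤ A i j) (v : V) :
    ∀ (k : ℕ) (i j : V) (hi : i ∈ sccOf A v) (hj : j ∈ sccOf A v), 0 < (A ^ k) i j →
      0 < ((subMat A (sccOf A v)) ^ k) ⟨i, hi⟩ ⟨j, hj⟩ := by
  intro k
  induction k with
  | zero =>
      intro i j hi hj hpos
      rw [pow_zero, Matrix.one_apply] at hpos ⊢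
      by_cases hij : i = j
      · subst hij; simp
      · simp [hij] at hpos
  | succ k ih =>
      intro i j hi hj hpos
      obtain ⟨m, hm1, hm2⟩ := pow_succ_exists' A hA k i j hpos
      have hm : m ∈ sccOf A v :=
        ⟨reaches_trans A hA hi.1 (reaches_of_edge A hm1),
         reaches_trans A hA ⟨k, hm2⟩ hj.2⟩
      have hsub := ih m j hm hj hm2
      rw [pow_succ', Matrix.mul_apply]
      have hterm : (0:ℝ) < subMat A (sccOf A v) ⟨i, hi⟩ ⟨m, hm⟩
          * ((subMat A (sccOf A v)) ^ k) ⟨m, hm⟩ ⟨j, hj⟩ := mul_pos hm1 hsub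
      refine lt_of_lt_of_le hterm ?_
      exact Finset.single_le_sum
        (f := fun m' => subMat A (sccOf A v) ⟨i, hi⟩ m'
          * ((subMat A (sccOf A v)) ^ k) m' ⟨j, hj⟩)
        (fun m' _ => mul_nonneg (subMat_nonneg A hA _ _ _)
          (pow_entry_nonneg' _ (subMat_nonneg A hA _) k _ _))
        (Finset.mem_univ (⟨m, hm⟩ : sccOf A v))

lemma subMat_conn (A : Matrix V V ℝ) (hA : ∀ i j, 0 ≤ A i j) (v : V) :
    ∀ i j : (sccOf A v : Set V), ∃ k, 0 < ((subMat A (sccOf A v)) ^ k) i j := by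
  rintro ⟨i, hi⟩ ⟨j, hj⟩
  obtain ⟨k, hk⟩ := reaches_trans A hA hi.2 hj.1
  exact ⟨k, subMat_pow_pos A hA v k i j hi hj hk⟩

lemma exists_exit (A : Matrix V V ℝ) (hA : ∀ i j, 0 ≤ A i j) (C : Set V) :
    ∀ (k : ℕ) (x u : V), x ∈ C → u ∉ C → 0 < (A ^ k) x u →
      ∃ a ∈ C, ∃ b, b ∉ C ∧ 0 < A a b ∧ Reaches A b u := by
  intro k
  induction k with
  | zero =>
      intro x u hx hu hpos
      rw [pow_zero, Matrix.one_apply] at hpos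
      by_cases hxu : x = u
      · exact absurd (hxu ▸ hx) hu
      · simp [hxu] at hpos
  | succ k ih =>
      intro x u hx hu hpos
      obtain ⟨m, hm1, hm2⟩ := pow_succ_exists' A hA k x u hpos
      by_cases hmC : m ∈ C
      · exact ih m u hmC hu hm2
      · exact ⟨x, hx, m, hmC, hm1, ⟨k, hm2⟩⟩

end Stmt13Aux

/-- if `β > 0` and `h ≠ 0` is a nonnegative vector with `A h = e^β h`, then
(a) some minimal strongly connected component `C` has `ρ(A_C) = e^β`; (b) `h` vanishes on every
strongly connected component with `ρ(A_C) > e^β`; and (c) `h` vanishes on every non-minimal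
strongly connected component with `ρ(A_C) = e^β`. -/
theorem stmt13 {V : Type*} [Fintype V] [DecidableEq V] [Nonempty V]
    (A : Matrix V V ℝ) (hA : ∀ i j, 0 ≤ A i j)
    (β : ℝ) (hβ : 0 < β) (h : V → ℝ) (hne : h ≠ 0) (hpos : ∀ u, 0 ≤ h u)
    (hharm : A.mulVec h = Real.exp β • h) :
    (∃ C : Set V, IsMinSCC A C ∧ specRadSub A C = Real.exp β) ∧
    (∀ C : Set V, IsSCC A C → Real.exp β < specRadSub A C → ∀ u ∈ C, h u = 0) ∧
    (∀ C : Set V, IsSCC A C → specRadSub A C = Real.exp β → ¬ IsMinSCC A C →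
      ∀ u ∈ C, h u = 0) := by
  set r : ℝ := Real.exp β with hr_def
  have hrpos : 0 < r := Real.exp_pos β
  set S : Set V := {u | 0 < h u} with hS_def
  -- powers of A applied to h
  have hpowvec : ∀ k : ℕ, (A ^ k).mulVec h = (r ^ k) • h := by
    intro k
    induction k with
    | zero => simp [Matrix.one_mulVec]
    | succ k ih =>
        rw [pow_succ, ← Matrix.mulVec_mulVec, hharm, Matrix.mulVec_smul, ih, smul_smul,
          pow_succ, mul_comm]
  -- upstream closure of the support
  have hup : ∀ {w u : V}, Reaches A w u → 0 < h u → 0 < h w := by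
    intro w u hr' hu
    obtain ⟨k, hk⟩ := hr'
    have heq : ∑ m, (A ^ k) w m * h m = r ^ k * h w := by
      have := congrFun (hpowvec k) w
      simpa [Matrix.mulVec, dotProduct] using this
    have hge : (A ^ k) w u * h u ≤ ∑ m, (A ^ k) w m * h m :=
      Finset.single_le_sum (f := fun m => (A ^ k) w m * h m)
        (fun m _ => mul_nonneg (pow_entry_nonneg' A hA k w m) (hpos m))
        (Finset.mem_univ u)
    have hposk : 0 < r ^ k * h w := lt_of_lt_of_le (mul_pos hk hu) (heq ▸ hge)
    by_contra hc
    have : h w = 0 := le_antisymm (not_lt.mp hc) (hpos w)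
    rw [this, mul_zero] at hposk
    exact lt_irrefl _ hposk
  -- subinvariance on any subset of the support
  have hsubinv : ∀ C : Set V, C ⊆ S →
      ∀ i : C, (subMat A C).mulVec (fun j : C => h ↑j) i ≤ r * h ↑i := by
    intro C hCS i
    have h1 : (subMat A C).mulVec (fun j : C => h ↑j) i = ∑ j : C, A ↑i ↑j * h ↑j := by
      simp [Matrix.mulVec, dotProduct, subMat, Matrix.submatrix_apply]
    rw [h1]
    have h2 : ∑ j : C, A ↑i ↑j * h ↑j ≤ ∑ j : V, A ↑i j * h j :=
      sum_subtype_le_sum C (fun j => A ↑i j * h j)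
        (fun j => mul_nonneg (hA _ j) (hpos j))
    have h3 : ∑ j : V, A ↑i j * h j = r * h ↑i := by
      have := congrFun hharm ↑i
      simpa [Matrix.mulVec, dotProduct] using this
    linarith
  -- positivity of h on any subset of support
  have hgpos : ∀ C : Set V, C ⊆ S → ∀ j : C, 0 < h ↑j := fun C hCS j => hCS j.2
  -- the minimality engine
  have Hmin : ∀ w : V, sccOf A w ⊆ S → ∀ C' : Set V, IsSCC A C' → C' ≠ sccOf A w →
      (∃ v' ∈ C', ∃ u ∈ sccOf A w, Reaches A v' u) → specRadSub A C' < r := by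
    rintro w hCS C' ⟨v', rfl⟩ hneq ⟨x, hx, u, hu, hreach⟩
    have huS : 0 < h u := hCS hu
    have hC'S : sccOf A v' ⊆ S := by
      intro w hw
      exact hup (reaches_trans A hA
        (reaches_trans A hA hw.2 hx.1) hreach) huS
    have huC' : u ∉ sccOf A v' := by
      intro huC'
      exact hneq ((sccOf_eq_of_mem A hA huC').symm.trans (sccOf_eq_of_mem A hA hu))
    obtain ⟨k, hk⟩ := hreach
    obtain ⟨a, ha, b, hb, hab, hbu⟩ := exists_exit A hA (sccOf A v') k x u hx huC' hk
    have hbS : 0 < h b := hup hbu huS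
    haveI : Nonempty (sccOf A v' : Set V) := ⟨⟨x, hx⟩⟩
    refine specRad_lt_of_subinv_strict (subMat A (sccOf A v'))
      (subMat_nonneg A hA _) (subMat_conn A hA v')
      (fun j => h ↑j) (hgpos _ hC'S) r (hsubinv _ hC'S) ⟨a, ha⟩ ?_
    have h1 : (subMat A (sccOf A v')).mulVec (fun j : (sccOf A v' : Set V) => h ↑j) ⟨a, ha⟩
        = ∑ j : (sccOf A v' : Set V), A a ↑j * h ↑j := by
      simp [Matrix.mulVec, dotProduct, subMat, Matrix.submatrix_apply]
    rw [h1]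
    have h2 : ∑ j : (sccOf A v' : Set V), A a ↑j * h ↑j
        ≤ ∑ j ∈ Finset.univ.erase b, A a j * h j :=
      sum_subtype_le_sum_erase (sccOf A v') (fun j => A a j * h j)
        (fun j => mul_nonneg (hA _ j) (hpos j)) b hb
    have h3 : ∑ j ∈ Finset.univ.erase b, A a j * h j + A a b * h b = ∑ j : V, A a j * h j :=
      Finset.sum_erase_add Finset.univ _ (Finset.mem_univ b)
    have h4 : ∑ j : V, A a j * h j = r * h a := by
      have := congrFun hharm a
      simpa [Matrix.mulVec, dotProduct] using this
    have h5 : 0 < A a b * h b := mul_pos hab hbS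
    linarith
  -- a component is contained in the support as soon as it touches it
  have hCinS : ∀ (v u : V), u ∈ sccOf A v → 0 < h u → sccOf A v ⊆ S := by
    intro v u hu huS w hw
    exact hup (reaches_trans A hA hw.2 hu.1) huS
  refine ⟨?_, ?_, ?_⟩
  · -- (a) existence of a minimal component with spectral radius r
    obtain ⟨u₀, hu₀⟩ := Function.ne_iff.mp hne
    have hu₀S : u₀ ∈ S := lt_of_le_of_ne (hpos u₀) (Ne.symm hu₀)
    set R : V → Finset V := fun v => ({w | Reaches A v w} : Set V).toFinset with hR_def
    have hmemR : ∀ v w, w ∈ R v ↔ Reaches A v w := by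
      intro v w; rw [hR_def]; exact Set.mem_toFinset
    obtain ⟨v₀, hv₀mem, hmin⟩ := Finset.exists_min_image S.toFinset (fun v => (R v).card)
      ⟨u₀, Set.mem_toFinset.mpr hu₀S⟩
    have hv₀S : v₀ ∈ S := Set.mem_toFinset.mp hv₀mem
    have hback : ∀ j, 0 < h j → Reaches A v₀ j → Reaches A j v₀ := by
      intro j hj hreach
      by_contra hnot
      have hsub : R j ⊆ R v₀ := by
        intro w hw
        exact (hmemR v₀ w).mpr (reaches_trans A hA hreach ((hmemR j w).mp hw))
      have hss : R j ⊂ R v₀ := (Finset.ssubset_iff_of_subset hsub).mpr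
        ⟨v₀, (hmemR v₀ v₀).mpr (reaches_refl A v₀),
          fun hc => hnot ((hmemR j v₀).mp hc)⟩
      exact absurd (hmin j (Set.mem_toFinset.mpr hj))
        (not_le.mpr (Finset.card_lt_card hss))
    set C : Set V := sccOf A v₀ with hC_def
    have hCS : C ⊆ S := hCinS v₀ v₀ (mem_sccOf_self A v₀) hv₀S
    haveI : Nonempty (C : Set V) := ⟨⟨v₀, mem_sccOf_self A v₀⟩⟩
    have heig : (subMat A C).mulVec (fun j : C => h ↑j) = r • (fun j : C => h ↑j) := by
      ext i
      have h1 : (subMat A C).mulVec (fun j : C => h ↑j) i = ∑ j : C, A ↑i ↑j * h ↑j := by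
        simp [Matrix.mulVec, dotProduct, subMat, Matrix.submatrix_apply]
      have h2 : ∑ j : C, A ↑i ↑j * h ↑j = ∑ j : V, A ↑i j * h j := by
        refine sum_subtype_eq_sum C (fun j => A ↑i j * h j) ?_
        intro j hjC
        by_contra hne0
        have hAij : 0 < A ↑i j := lt_of_le_of_ne (hA _ j) (by
          intro hc; exact hne0 (by simp [← hc]))
        have hhj : 0 < h j := lt_of_le_of_ne (hpos j) (by
          intro hc; exact hne0 (by simp [← hc]))
        have hv₀j : Reaches A v₀ j :=
          reaches_trans A hA i.2.1 (reaches_of_edge A hAij)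
        exact hjC ⟨hv₀j, hback j hhj hv₀j⟩
      have h3 : ∑ j : V, A ↑i j * h j = r * h ↑i := by
        have := congrFun hharm ↑i
        simpa [Matrix.mulVec, dotProduct] using this
      simp only [h1, h2, h3, Pi.smul_apply, smul_eq_mul]
    have hspec : specRadSub A C = r :=
      specRad_eq_of_eig (subMat A C) (subMat_nonneg A hA C)
        (fun j => h ↑j) (hgpos C hCS) r hrpos heig
    exact ⟨C, ⟨⟨v₀, rfl⟩, fun C' hC' hne' hreach' => by
      rw [hspec]; exact Hmin v₀ hCS C' hC' hne' hreach'⟩, hspec⟩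
  · -- (b)
    rintro C ⟨v, rfl⟩ hgt u huC
    by_contra hu0
    have huS : 0 < h u := lt_of_le_of_ne (hpos u) (Ne.symm hu0)
    have hCS := hCinS v u huC huS
    haveI : Nonempty (sccOf A v : Set V) := ⟨⟨u, huC⟩⟩
    have := specRad_le_of_subinv (subMat A (sccOf A v))
      (subMat_nonneg A hA _) (fun j => h ↑j) (hgpos _ hCS) r hrpos.le
      (hsubinv _ hCS)
    exact absurd hgt (not_lt.mpr this)
  · -- (c)
    rintro C hC heqr hnotmin u huC
    by_contra hu0
    have huS : 0 < h u := lt_of_le_of_ne (hpos u) (Ne.symm hu0)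
    obtain ⟨v, rfl⟩ := hC
    have hCS := hCinS v u huC huS
    exact hnotmin ⟨⟨v, rfl⟩, fun C' hC' hne' hreach' => by
      rw [heqr]; exact Hmin v hCS C' hC' hne' hreach'⟩
end
end

section
/- Let β > 0 and let K ⊆ V be the union of all minimal strongly connected components C with ρ(A_C) = e^β. If h : V → ℝ has nonnegative entries and satisfies A·h = e^β·h, then the restriction h|_K satisfies A_K·(h|_K) = e^β·(h|_K). -/
open Filter Topology ENNReal

noncomputable section

attribute [local instance] setFintypeAux

variable {V : Type*} [Fintype V] [DecidableEq V]

set_option linter.unusedSectionVars false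

namespace Stmt14Aux

section Basic
variable {n : Type*} [Fintype n] [DecidableEq n]

lemma pow_nonneg_entries {A : Matrix n n ℝ} (hA : ∀ i j, 0 ≤ A i j) (k : ℕ) :
    ∀ i j, 0 ≤ (A ^ k) i j := by
  induction k with
  | zero => intro i j; by_cases hij : i = j <;>
      simp [pow_zero, Matrix.one_apply, hij]
  | succ k ih =>
      intro i j
      rw [pow_succ, Matrix.mul_apply]
      exact Finset.sum_nonneg fun x _ => mul_nonneg (ih i x) (hA x j)

lemma mulVec_mono {M : Matrix n n ℝ} (hM : ∀ i j, 0 ≤ M i j) {f g : n → ℝ}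
    (hfg : ∀ i, f i ≤ g i) (i : n) : M.mulVec f i ≤ M.mulVec g i := by
  simp only [Matrix.mulVec, dotProduct]
  exact Finset.sum_le_sum fun j _ => mul_le_mul_of_nonneg_left (hfg j) (hM i j)

lemma mulVec_single_le {M : Matrix n n ℝ} (hM : ∀ i j, 0 ≤ M i j) {f : n → ℝ}
    (hf : ∀ i, 0 ≤ f i) (i j : n) : M i j * f j ≤ M.mulVec f i := by
  simp only [Matrix.mulVec, dotProduct]
  exact Finset.single_le_sum (fun k _ => mul_nonneg (hM i k) (hf k)) (Finset.mem_univ j)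

lemma mulVec_nonneg {M : Matrix n n ℝ} (hM : ∀ i j, 0 ≤ M i j) {f : n → ℝ}
    (hf : ∀ i, 0 ≤ f i) (i : n) : 0 ≤ M.mulVec f i :=
  Finset.sum_nonneg fun j _ => mul_nonneg (hM i j) (hf j)

lemma pow_mulVec_eig {A : Matrix n n ℝ} {h : n → ℝ} {c : ℝ}
    (hh : A.mulVec h = c • h) (k : ℕ) : (A ^ k).mulVec h = c ^ k • h := by
  induction k with
  | zero => simp
  | succ k ih =>
      rw [pow_succ', ← Matrix.mulVec_mulVec, ih, Matrix.mulVec_smul, hh, smul_smul, pow_succ',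
        mul_comm]

lemma exists_pos_of_sum_pos {s : Finset n} {f : n → ℝ} (h : 0 < ∑ i ∈ s, f i) :
    ∃ i ∈ s, 0 < f i := by
  by_contra hc
  push_neg at hc
  exact absurd (Finset.sum_nonpos hc) (not_le.mpr h)

/-- Eigenvector existence for a complex matrix. -/
lemma exists_eigenvector [Nonempty n] {M : Matrix n n ℂ} {μ : ℂ} (hμ : μ ∈ spectrum ℂ M) :
    ∃ y : n → ℂ, y ≠ 0 ∧ M.mulVec y = μ • y := by
  rw [← AlgEquiv.spectrum_eq (Matrix.toLinAlgEquiv' (R := ℂ) (n := n)) M] at hμ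
  have hev : Module.End.HasEigenvalue (Matrix.toLinAlgEquiv' M) μ :=
    Module.End.hasEigenvalue_iff_mem_spectrum.mpr hμ
  obtain ⟨y, hy⟩ := hev.exists_hasEigenvector
  refine ⟨y, hy.2, ?_⟩
  have := hy.apply_eq_smul
  rwa [Matrix.toLinAlgEquiv'_apply] at this

end Basic

/-- Reaches is reflexive. -/
lemma reaches_refl (A : Matrix V V ℝ) (v : V) : Reaches A v v :=
  ⟨0, by simp [Matrix.one_apply]⟩

lemma reaches_trans {A : Matrix V V ℝ} (hA : ∀ i j, 0 ≤ A i j) {u v w : V}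
    (h1 : Reaches A u v) (h2 : Reaches A v w) : Reaches A u w := by
  obtain ⟨k, hk⟩ := h1
  obtain ⟨l, hl⟩ := h2
  refine ⟨k + l, ?_⟩
  have : (A ^ k) u v * (A ^ l) v w ≤ (A ^ (k + l)) u w := by
    rw [pow_add, Matrix.mul_apply]
    exact Finset.single_le_sum
      (fun x _ => mul_nonneg (pow_nonneg_entries hA k u x) (pow_nonneg_entries hA l x w))
      (Finset.mem_univ v)
  exact lt_of_lt_of_le (mul_pos hk hl) this

/-- Paths between vertices of an SCC stay inside the SCC. -/
lemma subMat_pow_pos {A : Matrix V V ℝ} (hA : ∀ i j, 0 ≤ A i j) (v : V)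
    {k : ℕ} : ∀ {x u : V} (hx : x ∈ sccOf A v) (hu : u ∈ sccOf A v),
    0 < (A ^ k) x u → 0 < ((subMat A (sccOf A v)) ^ k) ⟨x, hx⟩ ⟨u, hu⟩ := by
  induction k with
  | zero =>
      intro x u hx hu hpos
      rw [pow_zero, Matrix.one_apply] at hpos ⊢
      by_cases hxy : x = u
      · subst hxy; simp
      · simp [hxy] at hpos
  | succ k ih =>
      intro x u hx hu hpos
      rw [pow_succ', Matrix.mul_apply] at hpos
      obtain ⟨y, -, hy⟩ := exists_pos_of_sum_pos hpos
      have hAxy : 0 < A x y := by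
        rcases (hA x y).lt_or_eq with h' | h'
        · exact h'
        · rw [← h', zero_mul] at hy; exact absurd hy (lt_irrefl 0)
      have hAyu : 0 < (A ^ k) y u := by
        rcases (pow_nonneg_entries hA k y u).lt_or_eq with h' | h'
        · exact h'
        · rw [← h', mul_zero] at hy; exact absurd hy (lt_irrefl 0)
      have hyC : y ∈ sccOf A v := by
        refine ⟨reaches_trans hA hx.1 ⟨1, by rwa [pow_one]⟩, reaches_trans hA ⟨k, hAyu⟩ hu.2⟩
      have hsub := ih (x := y) (u := u) hyC hu hAyu
      have hle : subMat A (sccOf A v) ⟨x, hx⟩ ⟨y, hyC⟩ *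
          ((subMat A (sccOf A v)) ^ k) ⟨y, hyC⟩ ⟨u, hu⟩ ≤
          ((subMat A (sccOf A v)) ^ (k+1)) ⟨x, hx⟩ ⟨u, hu⟩ := by
        rw [pow_succ', Matrix.mul_apply]
        exact Finset.single_le_sum (fun (z : (sccOf A v)) _ => mul_nonneg (hA x z.val)
          (pow_nonneg_entries (fun (i j : (sccOf A v)) => hA i.val j.val) k z ⟨u, hu⟩)) (Finset.mem_univ (⟨y, hyC⟩ : sccOf A v))
      exact lt_of_lt_of_le (mul_pos hAxy hsub) hle


/-- Key lemma: a strictly subinvariant positive vector on an SCC forces spectral radius < lam. -/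
lemma key (A : Matrix V V ℝ) (hA : ∀ i j, 0 ≤ A i j) (v u w : V)
    (lam : ℝ) (hlam : 0 < lam) (h : V → ℝ) (hpos : ∀ x, 0 ≤ h x)
    (hharm : A.mulVec h = lam • h)
    (hu : u ∈ sccOf A v) (hw : w ∉ sccOf A v) (hAuw : 0 < A u w) (hhw : 0 < h w) :
    specRadSub A (sccOf A v) < lam := by
  classical
  set C := sccOf A v with hC
  set B := subMat A C with hB
  have Bnn : ∀ i j : C, 0 ≤ B i j := fun i j => hA i.val j.val
  have hAh : ∀ x : V, A.mulVec h x = lam * h x := fun x => by rw [hharm]; rfl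
  -- h u > 0
  have hhu : 0 < h u := by
    have h1 : A u w * h w ≤ A.mulVec h u := mulVec_single_le hA hpos u w
    rw [hAh u] at h1
    nlinarith [mul_pos hAuw hhw, hpos u]
  -- h positive on C
  have gpos : ∀ x : C, 0 < h x.val := by
    intro x
    obtain ⟨k, hk⟩ := reaches_trans hA x.2.2 hu.1
    have h1 : (A ^ k) x.val u * h u ≤ (A ^ k).mulVec h x.val :=
      mulVec_single_le (pow_nonneg_entries hA k) hpos x.val u
    rw [pow_mulVec_eig hharm k] at h1
    have h2 : 0 < lam ^ k * h x.val := lt_of_lt_of_le (mul_pos hk hhu) h1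
    nlinarith [pow_pos hlam k, hpos x.val]
  set g : ↥C → ℝ := fun x => h x.val with hg
  have u0mem : u ∈ C := hu
  set u₀ : ↥C := ⟨u, u0mem⟩ with hu₀
  set s : Finset V := Finset.univ.filter (· ∈ C) with hs
  have hconv : ∀ x : C, B.mulVec g x = ∑ z ∈ s, A x.val z * h z := by
    intro x
    exact (Finset.sum_subtype (p := (· ∈ C)) s (fun z => by simp [hs])
      (fun z => A x.val z * h z)).symm
  have hwns : w ∉ s := by simp [hs, hw]
  set ε : ℝ := A u w * h w with hε'
  have hε : 0 < ε := mul_pos hAuw hhw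
  have hBg_le : ∀ x : C, B.mulVec g x ≤ lam * g x := by
    intro x
    rw [hconv x]
    calc ∑ z ∈ s, A x.val z * h z ≤ ∑ z : V, A x.val z * h z :=
          Finset.sum_le_sum_of_subset_of_nonneg (Finset.subset_univ s)
            (fun z _ _ => mul_nonneg (hA x.val z) (hpos z))
      _ = lam * h x.val := hAh x.val
  have hBg_u : B.mulVec g u₀ + ε ≤ lam * g u₀ := by
    rw [hconv u₀]
    calc ∑ z ∈ s, A u z * h z + ε = ∑ z ∈ insert w s, A u z * h z := by
          rw [Finset.sum_insert hwns]; ring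
      _ ≤ ∑ z : V, A u z * h z :=
          Finset.sum_le_sum_of_subset_of_nonneg (Finset.subset_univ _)
            (fun z _ _ => mul_nonneg (hA u z) (hpos z))
      _ = lam * h u := hAh u
  set d : ↥C → ℝ := fun x => lam * g x - B.mulVec g x with hd
  have hd0 : ∀ x, 0 ≤ d x := fun x => by simp [hd]; linarith [hBg_le x]
  have hdu : ε ≤ d u₀ := by simp [hd]; linarith [hBg_u]
  have hBgd : B.mulVec g = fun x => lam * g x - d x := by
    funext x; simp [hd]
  have hpowg : ∀ (k : ℕ) (x : C), ((B ^ k).mulVec g) x ≤ lam ^ k * g x := by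
    intro k
    induction k with
    | zero => intro x; simp [Matrix.one_mulVec]
    | succ k ih =>
        intro x
        have e1 : (B ^ (k + 1)).mulVec g = (B ^ k).mulVec (B.mulVec g) := by
          rw [Matrix.mulVec_mulVec, ← pow_succ]
        rw [e1]
        calc (B ^ k).mulVec (B.mulVec g) x ≤ (B ^ k).mulVec (fun y => lam * g y) x :=
              mulVec_mono (pow_nonneg_entries Bnn k) (fun y => hBg_le y) x
          _ = lam * (B ^ k).mulVec g x := by
              have : (fun y => lam * g y) = lam • g := by funext y; simp
              rw [this, Matrix.mulVec_smul]; rfl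
          _ ≤ lam ^ (k + 1) * g x := by
              rw [pow_succ']
              have := ih x
              nlinarith [hlam.le]
  have hrefined : ∀ (k : ℕ) (x : C),
      ((B ^ (k + 1)).mulVec g) x ≤ lam ^ (k + 1) * g x - (B ^ k) x u₀ * ε := by
    intro k x
    have e1 : (B ^ (k + 1)).mulVec g = (B ^ k).mulVec (B.mulVec g) := by
      rw [Matrix.mulVec_mulVec, ← pow_succ]
    have e2 : (B ^ k).mulVec (B.mulVec g) x
        = lam * (B ^ k).mulVec g x - (B ^ k).mulVec d x := by
      rw [hBgd]
      have : (fun y => lam * g y - d y) = lam • g - d := by funext y; simp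
      rw [this, Matrix.mulVec_sub, Matrix.mulVec_smul]
      rfl
    have h3 : (B ^ k) x u₀ * ε ≤ (B ^ k).mulVec d x := by
      calc (B ^ k) x u₀ * ε ≤ (B ^ k) x u₀ * d u₀ :=
            mul_le_mul_of_nonneg_left hdu (pow_nonneg_entries Bnn k x u₀)
        _ ≤ (B ^ k).mulVec d x := mulVec_single_le (pow_nonneg_entries Bnn k) hd0 x u₀
    have h4 := hpowg k x
    rw [e1, e2, pow_succ']
    nlinarith [hlam.le]
  -- spectral part
  have : Nonempty (C : Set V) := ⟨u₀⟩
  have hμlt : ∀ μ ∈ spectrum ℂ (B.map fun t : ℝ => (t : ℂ)), ‖μ‖ < lam := by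
    intro μ hμ
    obtain ⟨y, hy0, hy⟩ := exists_eigenvector hμ
    set z : ↥C → ℝ := fun x => ‖y x‖ with hz
    have znn : ∀ x, 0 ≤ z x := fun x => norm_nonneg _
    obtain ⟨x1, hx1⟩ : ∃ x1, y x1 ≠ 0 := Function.ne_iff.mp hy0
    have hzx1 : 0 < z x1 := norm_pos_iff.mpr hx1
    have step : ∀ x, ‖μ‖ * z x ≤ B.mulVec z x := by
      intro x
      have e1 : ‖μ‖ * z x = ‖(B.map fun t : ℝ => (t : ℂ)).mulVec y x‖ := by
        rw [hy]; simp [hz, norm_mul]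
      rw [e1]
      calc ‖∑ j, (B.map fun t : ℝ => (t : ℂ)) x j * y j‖
          ≤ ∑ j, ‖(B.map fun t : ℝ => (t : ℂ)) x j * y j‖ :=
            norm_sum_le _ _
        _ = ∑ j, B x j * z j := by
            refine Finset.sum_congr rfl fun j _ => ?_
            rw [norm_mul, Matrix.map_apply, Complex.norm_real, Real.norm_eq_abs, abs_of_nonneg (Bnn x j)]
        _ = B.mulVec z x := rfl
    have iter : ∀ (k : ℕ) (x : C), ‖μ‖ ^ k * z x ≤ (B ^ k).mulVec z x := by
      intro k
      induction k with
      | zero => intro x; simp [Matrix.one_mulVec]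
      | succ k ih =>
          intro x
          have e1 : (B ^ (k + 1)).mulVec z = (B ^ k).mulVec (B.mulVec z) := by
            rw [Matrix.mulVec_mulVec, ← pow_succ]
          have h1 : (B ^ k).mulVec (fun x' => ‖μ‖ * z x') x
              ≤ (B ^ k).mulVec (B.mulVec z) x :=
            mulVec_mono (pow_nonneg_entries Bnn k) (fun x' => step x') x
          have h2 : (B ^ k).mulVec (fun x' => ‖μ‖ * z x') x
              = ‖μ‖ * (B ^ k).mulVec z x := by
            have : (fun x' => ‖μ‖ * z x') = ‖μ‖ • z := by funext x'; simp
            rw [this, Matrix.mulVec_smul]; rfl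
          have h3 := ih x
          rw [e1]
          have habs : (0:ℝ) ≤ ‖μ‖ := norm_nonneg _
          calc ‖μ‖ ^ (k + 1) * z x
              = ‖μ‖ * (‖μ‖ ^ k * z x) := by ring
            _ ≤ ‖μ‖ * (B ^ k).mulVec z x := by nlinarith
            _ = (B ^ k).mulVec (fun x' => ‖μ‖ * z x') x := h2.symm
            _ ≤ (B ^ k).mulVec (B.mulVec z) x := h1
    obtain ⟨x0, -, hx0⟩ := Finset.exists_max_image Finset.univ (fun x : C => z x / g x)
      ⟨u₀, Finset.mem_univ u₀⟩
    set t : ℝ := z x0 / g x0 with htdef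
    have ht : ∀ x, z x ≤ t * g x := fun x =>
      (div_le_iff₀ (gpos x)).mp (hx0 x (Finset.mem_univ x))
    have htpos : 0 < t :=
      lt_of_lt_of_le (div_pos hzx1 (gpos x1)) (hx0 x1 (Finset.mem_univ x1))
    have hzx0 : z x0 = t * g x0 := by
      rw [htdef, div_mul_cancel₀ _ (ne_of_gt (gpos x0))]
    obtain ⟨k, hk⟩ := reaches_trans hA x0.2.2 hu.1
    have hc : 0 < (B ^ k) x0 u₀ := subMat_pow_pos hA v x0.2 u0mem hk
    set c : ℝ := (B ^ k) x0 u₀ with hcdef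
    have chain1 : ‖μ‖ ^ (k + 1) * z x0 ≤ (B ^ (k + 1)).mulVec z x0 := iter (k + 1) x0
    have chain2 : (B ^ (k + 1)).mulVec z x0 ≤ t * (B ^ (k + 1)).mulVec g x0 := by
      calc (B ^ (k + 1)).mulVec z x0 ≤ (B ^ (k + 1)).mulVec (fun x => t * g x) x0 :=
            mulVec_mono (pow_nonneg_entries Bnn (k + 1)) ht x0
        _ = t * (B ^ (k + 1)).mulVec g x0 := by
            have : (fun x => t * g x) = t • g := by funext x'; simp
            rw [this, Matrix.mulVec_smul]; rfl
    have chain3 : (B ^ (k + 1)).mulVec g x0 ≤ lam ^ (k + 1) * g x0 - c * ε := hrefined k x0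
    have hfin : ‖μ‖ ^ (k + 1) * (t * g x0) ≤ t * (lam ^ (k + 1) * g x0 - c * ε) := by
      rw [← hzx0]
      exact le_trans chain1 (le_trans chain2 (mul_le_mul_of_nonneg_left chain3 htpos.le))
    have hpowlt : ‖μ‖ ^ (k + 1) < lam ^ (k + 1) := by
      have hgx0 := gpos x0
      have h5 : 0 < t * (c * ε) := mul_pos htpos (mul_pos hc hε)
      nlinarith [mul_pos htpos hgx0]
    by_contra hge
    push_neg at hge
    exact absurd hpowlt (not_lt.mpr (pow_le_pow_left₀ hlam.le hge (k + 1)))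
  -- conclude about sSup
  show specRad B < lam
  rw [specRad]
  set S : Set ℝ := {r : ℝ | ∃ μ ∈ spectrum ℂ (B.map fun t : ℝ => (t : ℂ)), r = ‖μ‖}
    with hS
  have hSfin : S.Finite := by
    have : S = (fun μ : ℂ => ‖μ‖) '' (spectrum ℂ (B.map fun t : ℝ => (t : ℂ))) := by
      ext r; simp [hS, eq_comm]
    rw [this]
    exact (Matrix.finite_spectrum _).image _
  rcases S.eq_empty_or_nonempty with hSe | hSne
  · rw [hSe, Real.sSup_empty]; exact hlam
  · have := Set.Nonempty.csSup_mem hSne hSfin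
    obtain ⟨μ, hμ, hr⟩ := this
    rw [hr]
    exact hμlt μ hμ

end Stmt14Aux

/-- `K` is the union of all minimal strongly connected components `C` with
`ρ(A_C) = e^β`; if `h ≥ 0` and `A h = e^β h`, then `A_K (h|_K) = e^β (h|_K)`. -/
theorem stmt14 {V : Type*} [Fintype V] [DecidableEq V] [Nonempty V]
    (A : Matrix V V ℝ) (hA : ∀ i j, 0 ≤ A i j)
    (β : ℝ) (hβ : 0 < β)
    (K : Set V)
    (hK : K = {u : V | ∃ C : Set V, IsMinSCC A C ∧ specRadSub A C = Real.exp β ∧ u ∈ C})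
    (h : V → ℝ) (hpos : ∀ u, 0 ≤ h u) (hharm : A.mulVec h = Real.exp β • h) :
    (subMat A K).mulVec (fun u : K => h u.val) = Real.exp β • fun u : K => h u.val := by
  classical
  have key0 : ∀ (x : ↥K) (w : V), w ∉ K → A x.val w * h w = 0 := by
    intro x w hwK
    by_contra hne
    obtain ⟨h1, h2⟩ := mul_ne_zero_iff.mp hne
    have hAxw : 0 < A x.val w := (hA x.val w).lt_of_ne (Ne.symm h1)
    have hhw : 0 < h w := (hpos w).lt_of_ne (Ne.symm h2)
    have hxK : (x : V) ∈ {u : V | ∃ C : Set V, IsMinSCC A C ∧ specRadSub A C = Real.exp β ∧ u ∈ C} := by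
      rw [← hK]; exact x.2
    obtain ⟨C, hmin, hrad, hxC⟩ := hxK
    obtain ⟨v, hCv⟩ := hmin.1
    subst hCv
    have hwC : w ∉ sccOf A v := fun hwc => hwK (by rw [hK]; exact ⟨_, hmin, hrad, hwc⟩)
    have hlt := Stmt14Aux.key A hA v x.val w (Real.exp β) (Real.exp_pos β) h hpos hharm
      hxC hwC hAxw hhw
    rw [hrad] at hlt
    exact lt_irrefl _ hlt
  funext x
  show (subMat A K).mulVec (fun u : K => h u.val) x = Real.exp β * h x.val
  set s : Finset V := Finset.univ.filter (· ∈ K) with hs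
  have e1 : (subMat A K).mulVec (fun u : K => h u.val) x = ∑ z ∈ s, A x.val z * h z :=
    (Finset.sum_subtype (p := (· ∈ K)) s (fun z => by simp [hs]) (fun z => A x.val z * h z)).symm
  have e2 : ∑ z ∈ Finset.univ.filter (fun z => ¬ z ∈ K), A x.val z * h z = 0 :=
    Finset.sum_eq_zero fun z hz => key0 x z (Finset.mem_filter.mp hz).2
  have e3 : ∑ z : V, A x.val z * h z = Real.exp β * h x.val := by
    have := congrFun hharm x.val
    simpa [Matrix.mulVec, dotProduct] using this
  have e4 := Finset.sum_filter_add_sum_filter_not Finset.univ (· ∈ K)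
    (fun z => A x.val z * h z)
  rw [e1]
  rw [e2] at e4
  rw [← e3]
  simpa [hs] using e4
end
end

section
/- Let v ∈ V and suppose x_v := sup{x > 0 : Z_v(x) < ∞} satisfies 0 < x_v < ∞. Then for every w ∈ V the limit of Z_{w,v}(x)/Z_v(x) as x → x_v from the left exists and lies in [0,1] (the quotient taken in [0,∞]; note Z_v(x) ≥ 1 since (A⁰)_{v,v} = 1). -/
set_option linter.unusedSectionVars false
set_option maxHeartbeats 1000000



open Filter Topology ENNReal

noncomputable section

attribute [local instance] setFintypeAux

variable {V : Type*} [Fintype V] [DecidableEq V]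

/-- `x_v := sup {x > 0 : Z_v(x) < ∞}`. -/
def critTemp (A : Matrix V V ℝ) (v : V) : ℝ :=
  sSup {x : ℝ | 0 < x ∧ Zvert A v x < ⊤}


section Aux
open Polynomial NNReal

/-- A ratio of polynomials which stays in `[0,1]` to the left of `R` has a limit there. -/
lemma ratLim (p q : ℝ[X]) (hq : q ≠ 0) (R : ℝ)
    (hb : ∀ᶠ x in 𝓝[<] R, p.eval x / q.eval x ∈ Set.Icc (0:ℝ) 1) :
    ∃ L : ℝ, L ∈ Set.Icc (0:ℝ) 1 ∧
      Tendsto (fun x => p.eval x / q.eval x) (𝓝[<] R) (𝓝 L) := by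
  rcases eq_or_ne p 0 with rfl | hp
  · exact ⟨0, ⟨le_refl _, zero_le_one⟩, by simpa using tendsto_const_nhds⟩
  obtain ⟨p1, hpe, hp1⟩ := p.exists_eq_pow_rootMultiplicity_mul_and_not_dvd hp R
  obtain ⟨q1, hqe, hq1⟩ := q.exists_eq_pow_rootMultiplicity_mul_and_not_dvd hq R
  set a := p.rootMultiplicity R
  set b := q.rootMultiplicity R
  have hp1R : p1.eval R ≠ 0 := fun h => hp1 (dvd_iff_isRoot.mpr h)
  have hq1R : q1.eval R ≠ 0 := fun h => hq1 (dvd_iff_isRoot.mpr h)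
  have hxR : ∀ᶠ x : ℝ in 𝓝[<] R, x ≠ R :=
    eventually_mem_nhdsWithin.mono fun x hx => ne_of_lt hx
  have hp1e : ∀ᶠ x : ℝ in 𝓝[<] R, p1.eval x ≠ 0 :=
    ((p1.continuousAt.eventually_ne hp1R)).filter_mono nhdsWithin_le_nhds
  have hq1e : ∀ᶠ x : ℝ in 𝓝[<] R, q1.eval x ≠ 0 :=
    ((q1.continuousAt.eventually_ne hq1R)).filter_mono nhdsWithin_le_nhds
  rcases le_or_gt b a with hba | hab
  · -- ratio = (x-R)^(a-b) * p1 / q1 eventually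
    have key : ∀ᶠ x : ℝ in 𝓝[<] R,
        p.eval x / q.eval x = (x - R) ^ (a - b) * p1.eval x / q1.eval x := by
      filter_upwards [hxR] with x hx
      have hxe : (x - R) ^ b ≠ 0 := pow_ne_zero _ (sub_ne_zero.mpr hx)
      have : p.eval x = (x - R) ^ b * ((x - R) ^ (a - b) * p1.eval x) := by
        rw [hpe]; simp [eval_mul, eval_pow, ← mul_assoc, ← pow_add,
          Nat.add_sub_cancel' hba]
      rw [this, hqe]
      simp only [eval_mul, eval_pow, eval_sub, eval_X, eval_C]
      rw [mul_div_mul_left _ _ hxe]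
    set L : ℝ := (R - R) ^ (a - b) * p1.eval R / q1.eval R with hL
    have hcont : Tendsto (fun x : ℝ => (x - R) ^ (a - b) * p1.eval x / q1.eval x)
        (𝓝 R) (𝓝 L) := by
      apply Tendsto.div _ q1.continuousAt hq1R
      exact (((continuous_id.sub continuous_const).pow _).mul p1.continuous).continuousAt
    have htend : Tendsto (fun x => p.eval x / q.eval x) (𝓝[<] R) (𝓝 L) :=
      Tendsto.congr' (key.mono fun _ h => h.symm) (hcont.mono_left nhdsWithin_le_nhds)
    refine ⟨L, ⟨?_, ?_⟩, htend⟩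
    · exact ge_of_tendsto htend (hb.mono fun x h => h.1)
    · exact le_of_tendsto htend (hb.mono fun x h => h.2)
  · -- contradiction: ratio is unbounded
    exfalso
    have key : ∀ᶠ x : ℝ in 𝓝[<] R,
        (p.eval x / q.eval x)⁻¹ = (x - R) ^ (b - a) * q1.eval x / p1.eval x := by
      filter_upwards [hxR] with x hx
      have hxe : (x - R) ^ a ≠ 0 := pow_ne_zero _ (sub_ne_zero.mpr hx)
      have : q.eval x = (x - R) ^ a * ((x - R) ^ (b - a) * q1.eval x) := by
        rw [hqe]; simp [eval_mul, eval_pow, ← mul_assoc, ← pow_add,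
          Nat.add_sub_cancel' hab.le]
      rw [this, hpe]
      simp only [eval_mul, eval_pow, eval_sub, eval_X, eval_C]
      rw [mul_div_mul_left _ _ hxe, inv_div]
    have hcont : Tendsto (fun x : ℝ => (x - R) ^ (b - a) * q1.eval x / p1.eval x)
        (𝓝 R) (𝓝 0) := by
      have : Tendsto (fun x : ℝ => (x - R) ^ (b - a) * q1.eval x / p1.eval x)
          (𝓝 R) (𝓝 ((R - R) ^ (b - a) * q1.eval R / p1.eval R)) := by
        apply Tendsto.div _ p1.continuousAt hp1R
        exact (((continuous_id.sub continuous_const).pow _).mul q1.continuous).continuousAt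
      simpa [zero_pow (Nat.sub_ne_zero_of_lt hab)] using this
    have htend : Tendsto (fun x => (p.eval x / q.eval x)⁻¹) (𝓝[<] R) (𝓝 0) :=
      Tendsto.congr' (key.mono fun _ h => h.symm) (hcont.mono_left nhdsWithin_le_nhds)
    have hsmall : ∀ᶠ x : ℝ in 𝓝[<] R, |(p.eval x / q.eval x)⁻¹| < 1 := by
      have := htend.eventually (eventually_abs_sub_lt 0 one_pos)
      simpa using this
    have hpos : ∀ᶠ x : ℝ in 𝓝[<] R, p.eval x / q.eval x ≠ 0 := by
      filter_upwards [hxR, hp1e, hq1e] with x hx h1 h2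
      rw [hpe, hqe]
      simp only [eval_mul, eval_pow, eval_sub, eval_X, eval_C]
      have hxe : x - R ≠ 0 := sub_ne_zero.mpr hx
      exact div_ne_zero (by positivity) (by positivity)
    have : ∀ᶠ x : ℝ in 𝓝[<] R, False := by
      filter_upwards [hb, hsmall, hpos] with x hx h1 h2
      have h3 : 0 < p.eval x / q.eval x := lt_of_le_of_ne hx.1 (Ne.symm h2)
      have h4 : 1 ≤ (p.eval x / q.eval x)⁻¹ := one_le_inv_iff₀.mpr ⟨h3, hx.2⟩
      rw [abs_of_pos (lt_of_lt_of_le one_pos h4)] at h1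
      linarith
    exact this.exists.choose_spec



lemma powEntryNonneg (A : Matrix V V ℝ) (hA : ∀ i j, 0 ≤ A i j) :
    ∀ (k : ℕ) (i j : V), 0 ≤ (A ^ k) i j := by
  intro k
  induction k with
  | zero => intro i j; simp [Matrix.one_apply]; positivity
  | succ n ih =>
    intro i j
    rw [pow_succ, Matrix.mul_apply]
    exact Finset.sum_nonneg fun u _ => mul_nonneg (ih i u) (hA u j)


lemma summable_of_Zfun_lt_top {A : Matrix V V ℝ} {w v : V} {x : ℝ}
    (hnn : ∀ k : ℕ, 0 ≤ x ^ k * (A ^ k) w v) (h : Zfun A w v x < ⊤) :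
    Summable (fun k : ℕ => x ^ k * (A ^ k) w v) := by
  set f : ℕ → ℝ := fun k => x ^ k * (A ^ k) w v
  set nn : ℕ → ℝ≥0 := fun k => Real.toNNReal (f k) with hnndef
  have hco : ∀ k, ENNReal.ofReal (f k) = (nn k : ℝ≥0∞) := fun k => rfl
  have : (∑' k, (nn k : ℝ≥0∞)) ≠ ⊤ := by
    rw [← tsum_congr hco]; exact h.ne
  have hs := ENNReal.tsum_coe_ne_top_iff_summable.mp this
  have h2 := NNReal.summable_coe.mpr hs
  refine h2.congr fun k => ?_
  simp [hnndef, Real.coe_toNNReal _ (hnn k)]; exact hnn k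

def gg (A : Matrix V V ℝ) (v w : V) (x : ℝ) : ℝ := ∑' k : ℕ, x ^ k * (A ^ k) w v

def GG (A : Matrix V V ℝ) (v : V) (x : ℝ) : ℝ := ∑ w, gg A v w x

lemma Zfun_eq_ofReal {A : Matrix V V ℝ} {w v : V} {x : ℝ}
    (hs : Summable (fun k : ℕ => x ^ k * (A ^ k) w v))
    (hnn : ∀ k : ℕ, 0 ≤ x ^ k * (A ^ k) w v) :
    Zfun A w v x = ENNReal.ofReal (gg A v w x) := by
  rw [Zfun, gg, ENNReal.ofReal_tsum_of_nonneg hnn hs]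

lemma Zvert_eq_ofReal {A : Matrix V V ℝ} {v : V} {x : ℝ}
    (hs : ∀ w, Summable (fun k : ℕ => x ^ k * (A ^ k) w v))
    (hnn : ∀ (w : V) (k : ℕ), 0 ≤ x ^ k * (A ^ k) w v) :
    Zvert A v x = ENNReal.ofReal (GG A v x) := by
  have hgnn : ∀ w ∈ Finset.univ, 0 ≤ gg A v w x := fun w _ => tsum_nonneg (hnn w)
  rw [Zvert, GG, ENNReal.ofReal_sum_of_nonneg hgnn]
  exact Finset.sum_congr rfl fun w _ => Zfun_eq_ofReal (hs w) (hnn w)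

/-- The resolvent-column equation `(1 - x A) g = e_v`. -/
lemma resolvent_eq {A : Matrix V V ℝ} {v : V} {x : ℝ}
    (hs : ∀ w, Summable (fun k : ℕ => x ^ k * (A ^ k) w v)) (w : V) :
    gg A v w x = (if w = v then (1:ℝ) else 0) + x * ∑ u, A w u * gg A v u x := by
  have h0 : gg A v w x
      = x ^ 0 * (A ^ 0) w v + ∑' k : ℕ, x ^ (k+1) * (A ^ (k+1)) w v :=
    Summable.tsum_eq_zero_add (hs w)
  have hterm : ∀ k : ℕ, x ^ (k+1) * (A ^ (k+1)) w v
      = ∑ u, x * (A w u * (x ^ k * (A ^ k) u v)) := by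
    intro k
    rw [pow_succ' A k, Matrix.mul_apply, Finset.mul_sum, pow_succ' x k]
    refine Finset.sum_congr rfl fun u _ => by ring
  have hsum : ∀ u : V, Summable (fun k : ℕ => x * (A w u * (x ^ k * (A ^ k) u v))) :=
    fun u => (((hs u).mul_left _).mul_left _)
  calc gg A v w x = x ^ 0 * (A ^ 0) w v + ∑' k : ℕ, ∑ u, x * (A w u * (x ^ k * (A ^ k) u v)) := by
        rw [h0]; exact congrArg _ (tsum_congr hterm)
    _ = (if w = v then (1:ℝ) else 0) + x * ∑ u, A w u * gg A v u x := by
        rw [Summable.tsum_finsetSum (fun u _ => hsum u)]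
        congr 1
        · simp [Matrix.one_apply]
        · rw [Finset.mul_sum]
          refine Finset.sum_congr rfl fun u _ => ?_
          simp [gg, _root_.tsum_mul_left]

lemma cramer_id {A : Matrix V V ℝ} {v : V} {x : ℝ}
    (hs : ∀ w, Summable (fun k : ℕ => x ^ k * (A ^ k) w v)) (w : V) :
    (1 - x • A).det * gg A v w x = (1 - x • A).adjugate w v := by
  set M : Matrix V V ℝ := 1 - x • A with hM
  have hmv : M.mulVec (fun u => gg A v u x) = Pi.single v 1 := by
    funext u
    rw [Matrix.mulVec, dotProduct]
    have : ∀ u' ∈ Finset.univ, M u u' * gg A v u' x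
        = (if u = u' then gg A v u' x else 0) - x * (A u u' * gg A v u' x) := by
      intro u' _
      simp only [hM, Matrix.sub_apply, Matrix.one_apply, Matrix.smul_apply, smul_eq_mul]
      split <;> ring
    rw [Finset.sum_congr rfl this, Finset.sum_sub_distrib]
    simp only [Finset.sum_ite_eq, Finset.mem_univ, if_true]
    rw [← Finset.mul_sum, Pi.single_apply]
    have hre := resolvent_eq hs u
    linarith [hre]
  have h1 : M.adjugate.mulVec (M.mulVec (fun u => gg A v u x)) = M.det • (fun u => gg A v u x) := by
    rw [Matrix.mulVec_mulVec, Matrix.adjugate_mul, Matrix.smul_mulVec, Matrix.one_mulVec]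
  rw [hmv] at h1
  have h2 : M.adjugate.mulVec (Pi.single v 1) = fun u => M.adjugate u v := by
    funext u
    rw [Matrix.mulVec, dotProduct]
    simp [Pi.single_apply]
  rw [h2] at h1
  have := congrFun h1 w
  simpa [mul_comm] using this.symm

def BB (A : Matrix V V ℝ) : Matrix V V ℝ[X] := 1 - (X : ℝ[X]) • (A.map C)

lemma BB_eval (A : Matrix V V ℝ) (x : ℝ) :
    (BB A).map (evalRingHom x) = 1 - x • A := by
  ext i j
  simp [BB, Matrix.one_apply, apply_ite]
  ring

lemma det_eval (A : Matrix V V ℝ) (x : ℝ) :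
    ((BB A).det).eval x = (1 - x • A).det := by
  rw [← BB_eval A x]
  exact RingHom.map_det (evalRingHom x) (BB A)

lemma adj_eval (A : Matrix V V ℝ) (x : ℝ) (w v : V) :
    ((BB A).adjugate w v).eval x = (1 - x • A).adjugate w v := by
  rw [← BB_eval A x, ← RingHom.mapMatrix_apply, ← RingHom.map_adjugate]
  rfl

lemma finite_eventually_notMem {S : Set ℝ} (hS : S.Finite) (R : ℝ) :
    ∀ᶠ x in 𝓝[<] R, x ∉ S := by
  have h : ∀ a ∈ S, ∀ᶠ x in 𝓝[<] R, x ≠ a := by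
    intro a _
    rcases eq_or_ne a R with rfl | h
    · exact eventually_mem_nhdsWithin.mono fun x hx => ne_of_lt hx
    · exact eventually_ne_nhdsWithin h.symm
  have := (hS.eventually_all (p := fun a x => x ≠ a)).mpr h
  exact this.mono fun x hx hmem => hx x hmem rfl



end Aux

section Main
open Polynomial NNReal
/-- if `0 < x_v < ∞` (i.e. the set `{x > 0 : Z_v(x) < ∞}` is nonempty and
bounded above), then for every `w` the limit of `Z_{w,v}(x)/Z_v(x)` as `x → x_v` from the
left exists and lies in `[0,1]`. -/
theorem stmt17 {V : Type*} [Fintype V] [DecidableEq V] [Nonempty V]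
    (A : Matrix V V ℝ) (hA : ∀ i j, 0 ≤ A i j) (v : V)
    (hne : {x : ℝ | 0 < x ∧ Zvert A v x < ⊤}.Nonempty)
    (hbdd : BddAbove {x : ℝ | 0 < x ∧ Zvert A v x < ⊤}) :
    ∀ w : V, ∃ L : ℝ≥0∞, L ≤ 1 ∧
      Filter.Tendsto (fun x => Zfun A w v x / Zvert A v x)
        (𝓝[<] critTemp A v) (𝓝 L) := by
  intro w
  set S := {x : ℝ | 0 < x ∧ Zvert A v x < ⊤} with hSdef
  set R := critTemp A v with hRdef
  have hRS : R = sSup S := rfl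
  obtain ⟨x0, hx0⟩ := hne
  have hR0 : 0 < R := lt_of_lt_of_le hx0.1 (le_csSup hbdd hx0)
  have hnn : ∀ x : ℝ, 0 ≤ x → ∀ (u : V) (k : ℕ), 0 ≤ x ^ k * (A ^ k) u v :=
    fun x hx u k => mul_nonneg (pow_nonneg hx k) (powEntryNonneg A hA k u v)
  have hsum : ∀ x : ℝ, 0 < x → x < R → ∀ u : V,
      Summable fun k : ℕ => x ^ k * (A ^ k) u v := by
    intro x hx hxR u
    obtain ⟨x', hx'S, hxx'⟩ := exists_lt_of_lt_csSup ⟨x0, hx0⟩ (hRS ▸ hxR)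
    have hmono : Zfun A u v x ≤ Zfun A u v x' := by
      refine ENNReal.tsum_le_tsum fun k => ENNReal.ofReal_le_ofReal ?_
      exact mul_le_mul_of_nonneg_right (pow_le_pow_left₀ hx.le hxx'.le k)
        (powEntryNonneg A hA k u v)
    have hle : Zfun A u v x' ≤ Zvert A v x' :=
      Finset.single_le_sum (f := fun u => Zfun A u v x') (fun _ _ => zero_le)
        (Finset.mem_univ u)
    exact summable_of_Zfun_lt_top (hnn x hx.le u)
      (lt_of_le_of_lt (hmono.trans hle) hx'S.2)
  set P : ℝ[X] := (BB A).adjugate w v with hPdef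
  set Q : ℝ[X] := ∑ u : V, (BB A).adjugate u v with hQdef
  have hQ0 : Q.eval 0 = 1 := by
    rw [hQdef, eval_finset_sum]
    have he : ∀ u ∈ Finset.univ, ((BB A).adjugate u v).eval 0 = (1 : Matrix V V ℝ) u v := by
      intro u _
      rw [adj_eval]
      norm_num [Matrix.adjugate_one]
    rw [Finset.sum_congr rfl he]
    simp [Matrix.one_apply]
  have hQne : Q ≠ 0 := fun h => by simp [h] at hQ0
  have hd0 : ((BB A).det) ≠ 0 := by
    intro h
    have h2 := det_eval A 0
    rw [h] at h2
    norm_num [Matrix.det_one] at h2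
  have hev : ∀ᶠ x in 𝓝[<] R, (0 < x ∧ x < R) ∧ ((BB A).det).eval x ≠ 0 := by
    have h1 : ∀ᶠ x in 𝓝[<] R, x < R := eventually_mem_nhdsWithin
    have h2 : ∀ᶠ x in 𝓝 R, 0 < x := eventually_gt_nhds hR0
    have h3 := finite_eventually_notMem (Polynomial.finite_setOf_isRoot hd0) R
    filter_upwards [h1, h2.filter_mono nhdsWithin_le_nhds, h3] with x hx1 hx2 hx3
    exact ⟨⟨hx2, hx1⟩, fun h => hx3 h⟩
  have hpt : ∀ x : ℝ, 0 < x → x < R → ((BB A).det).eval x ≠ 0 →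
      (Zfun A w v x / Zvert A v x = ENNReal.ofReal (P.eval x / Q.eval x)) ∧
      P.eval x / Q.eval x ∈ Set.Icc (0:ℝ) 1 := by
    intro x hx hxR hd
    have hsu := hsum x hx hxR
    have hnnx := hnn x hx.le
    have hgnn : ∀ u : V, 0 ≤ gg A v u x := fun u => tsum_nonneg (hnnx u)
    have hG1 : (1:ℝ) ≤ GG A v x := by
      have h1 : x ^ 0 * (A ^ 0) v v ≤ gg A v v x :=
        Summable.le_tsum (hsu v) 0 fun k _ => hnnx v k
      have h2 : gg A v v x ≤ GG A v x :=
        Finset.single_le_sum (f := fun u => gg A v u x) (fun u _ => hgnn u)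
          (Finset.mem_univ v)
      have h3 : x ^ 0 * (A ^ 0) v v = 1 := by simp [Matrix.one_apply]
      linarith
    have hgleG : gg A v w x ≤ GG A v x :=
      Finset.single_le_sum (f := fun u => gg A v u x) (fun u _ => hgnn u)
        (Finset.mem_univ w)
    have hdP : ((BB A).det).eval x * gg A v w x = P.eval x := by
      rw [det_eval, hPdef, adj_eval]
      exact cramer_id hsu w
    have hdQ : ((BB A).det).eval x * GG A v x = Q.eval x := by
      rw [hQdef, eval_finset_sum, GG, Finset.mul_sum]
      refine Finset.sum_congr rfl fun u _ => ?_
      rw [adj_eval, det_eval A x]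
      exact cramer_id hsu u
    have hratio : P.eval x / Q.eval x = gg A v w x / GG A v x := by
      rw [← hdP, ← hdQ, mul_div_mul_left _ _ hd]
    constructor
    · rw [Zfun_eq_ofReal (hsu w) (hnnx w), Zvert_eq_ofReal hsu hnnx, hratio,
        ENNReal.ofReal_div_of_pos (lt_of_lt_of_le one_pos hG1)]
    · rw [hratio]
      exact ⟨div_nonneg (hgnn w) (by linarith),
        div_le_one_of_le₀ hgleG (by linarith)⟩
  have hbnd : ∀ᶠ x in 𝓝[<] R, P.eval x / Q.eval x ∈ Set.Icc (0:ℝ) 1 :=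
    hev.mono fun x hx => (hpt x hx.1.1 hx.1.2 hx.2).2
  have hkey : ∀ᶠ x in 𝓝[<] R,
      Zfun A w v x / Zvert A v x = ENNReal.ofReal (P.eval x / Q.eval x) :=
    hev.mono fun x hx => (hpt x hx.1.1 hx.1.2 hx.2).1
  obtain ⟨L0, hL0, htend⟩ := ratLim P Q hQne R hbnd
  refine ⟨ENNReal.ofReal L0, ENNReal.ofReal_le_one.mpr hL0.2, ?_⟩
  have h1 : Tendsto (fun x => ENNReal.ofReal (P.eval x / Q.eval x)) (𝓝[<] R)
      (𝓝 (ENNReal.ofReal L0)) := (ENNReal.continuous_ofReal.tendsto L0).comp htend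
  exact Filter.Tendsto.congr' (hkey.mono fun x h => h.symm) h1

end Main
end
end
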